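/- arXiv:1912.10111 — 3 statements merged into one kernel-verified Lean document; each statement's English description precedes it below -/
import Mathlib

section
/- Let (f,g) ∈ C_4(I) and let μ be a Borel probability measure on [0,1]. Then for every fixed x ∈ I, the function m_x := m_{x;f,g;μ} is four times continuously differentiable in a neighborhood of 0 and its fourth derivative at 0 satisfies m_x''''(0) = −3μ₂²·(Φ³_{f,g} + 2Φ_{f,g}Ψ_{f,g})(x) + μ₄·(Φ''_{f,g} + 3Φ'_{f,g}Φ_{f,g} + Φ³_{f,g} + 2Φ_{f,g}Ψ_{f,g} + 2Ψ'_{f,g})(x). -/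
open MeasureTheory Set

/-- The generalized quasiarithmetic mean `M_{f,g;μ}` on the interval `I`. -/
noncomputable def Mmean (I : Set ℝ) (f g : ℝ → ℝ) (μ : Measure ℝ) (x y : ℝ) : ℝ :=
  Function.invFunOn (fun t => f t / g t) I
    ((∫ t in Set.Icc (0:ℝ) 1, f (t * x + (1 - t) * y) ∂μ) /
      (∫ t in Set.Icc (0:ℝ) 1, g (t * x + (1 - t) * y) ∂μ))

/-- First moment `μ̂₁` of a measure on `[0,1]`. -/
noncomputable def mom1 (μ : Measure ℝ) : ℝ := ∫ t in Set.Icc (0:ℝ) 1, t ∂μ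

/-- `n`-th centralized moment `μ_n` of a measure on `[0,1]`. -/
noncomputable def cmom (μ : Measure ℝ) (n : ℕ) : ℝ :=
  ∫ t in Set.Icc (0:ℝ) 1, (t - mom1 μ) ^ n ∂μ

/-- The auxiliary function `m_{x;f,g;μ}`. -/
noncomputable def mfun (I : Set ℝ) (f g : ℝ → ℝ) (μ : Measure ℝ) (x : ℝ) : ℝ → ℝ :=
  fun u => Mmean I f g μ (x + (1 - mom1 μ) * u) (x - mom1 μ * u)

/-- The `(i,j)`-order Wronskian `W^{i,j}_{f,g} = f⁽ⁱ⁾g⁽ʲ⁾ − f⁽ʲ⁾g⁽ⁱ⁾`. -/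
noncomputable def Wr (i j : ℕ) (f g : ℝ → ℝ) : ℝ → ℝ :=
  fun x => iteratedDeriv i f x * iteratedDeriv j g x - iteratedDeriv j f x * iteratedDeriv i g x

/-- `Φ_{f,g} = W^{2,0}/W^{1,0}`. -/
noncomputable def Phi (f g : ℝ → ℝ) : ℝ → ℝ := fun x => Wr 2 0 f g x / Wr 1 0 f g x

/-- `Ψ_{f,g} = −W^{2,1}/W^{1,0}`. -/
noncomputable def Psi (f g : ℝ → ℝ) : ℝ → ℝ := fun x => -(Wr 2 1 f g x / Wr 1 0 f g x)

/-- The class `𝒞_n(I)` for `n ≥ 1`. -/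
def ClassC (n : ℕ) (I : Set ℝ) (f g : ℝ → ℝ) : Prop :=
  ContDiffOn ℝ n f I ∧ ContDiffOn ℝ n g I ∧ (∀ x ∈ I, 0 < g x) ∧
    ∀ x ∈ I, Wr 1 0 f g x ≠ 0

/-- The class `𝒞₀(I)`. -/
def ClassC0 (I : Set ℝ) (f g : ℝ → ℝ) : Prop :=
  ContinuousOn f I ∧ ContinuousOn g I ∧ (∀ x ∈ I, 0 < g x) ∧
    (StrictMonoOn (fun x => f x / g x) I ∨ StrictAntiOn (fun x => f x / g x) I)

/-- Equivalence of pairs: `(f,g) ∼ (F,G)`. -/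
def EquivPair (I : Set ℝ) (f g F G : ℝ → ℝ) : Prop :=
  ∃ a b c d : ℝ, a * d ≠ b * c ∧
    ∀ x ∈ I, F x = a * f x + b * g x ∧ G x = c * f x + d * g x

/-- Equality of two two-variable means near the diagonal of `I²`. -/
def EqualNearDiag (I : Set ℝ) (M N : ℝ → ℝ → ℝ) : Prop :=
  ∃ U : Set (ℝ × ℝ), IsOpen U ∧ U ⊆ I ×ˢ I ∧
    I ⊆ closure {y | y ∈ I ∧ (y, y) ∈ U} ∧
    ∀ p ∈ U, M p.1 p.2 = N p.1 p.2

/-- The quasiarithmetic mean `A_φ`. -/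
noncomputable def QAmean (I : Set ℝ) (φ : ℝ → ℝ) (x y : ℝ) : ℝ :=
  Function.invFunOn φ I ((φ x + φ y) / 2)

/-- The sine-type function `S_t`. -/
noncomputable def Sfun (t x : ℝ) : ℝ :=
  if t < 0 then Real.sin (Real.sqrt (-t) * x)
  else if t = 0 then x
  else Real.sinh (Real.sqrt t * x)

/-- The cosine-type function `C_t`. -/
noncomputable def Cfun (t x : ℝ) : ℝ :=
  if t < 0 then Real.cos (Real.sqrt (-t) * x)
  else if t = 0 then 1
  else Real.cosh (Real.sqrt t * x)

/-- The real (sign-preserving) cube root. -/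
noncomputable def cbrt (x : ℝ) : ℝ :=
  if x < 0 then -((-x) ^ ((1:ℝ)/3)) else x ^ ((1:ℝ)/3)


open Metric

set_option linter.unusedSectionVars false
set_option linter.unusedVariables false

section AuxIter

section Aux
variable {F : ℝ → ℝ} {s : Set ℝ} {n k : ℕ}

lemma aux_contDiffOn_iteratedDeriv (hF : ContDiffOn ℝ n F s) (hs : IsOpen s) (hk : k ≤ n) :
    ContDiffOn ℝ (n - k : ℕ) (iteratedDeriv k F) s := by
  induction k with
  | zero => simpa [iteratedDeriv_zero] using hF
  | succ k ih =>
    have hk' : k ≤ n := le_of_lt (Nat.lt_of_succ_le hk)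
    have h1 : ContDiffOn ℝ (n - k : ℕ) (iteratedDeriv k F) s := ih hk'
    rw [iteratedDeriv_succ]
    have : ((n - (k+1) : ℕ) : WithTop ℕ∞) + 1 ≤ ((n - k : ℕ) : WithTop ℕ∞) := by
      have : (n - (k+1)) + 1 = n - k := by omega
      rw [← this]; push_cast; simp
    exact h1.deriv_of_isOpen hs this

lemma aux_hasDerivAt_iteratedDeriv (hF : ContDiffOn ℝ n F s) (hs : IsOpen s) (hk : k < n) :
    ∀ y ∈ s, HasDerivAt (iteratedDeriv k F) (iteratedDeriv (k + 1) F y) y := by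
  intro y hy
  have h1 : ContDiffOn ℝ (n - k : ℕ) (iteratedDeriv k F) s :=
    aux_contDiffOn_iteratedDeriv hF hs hk.le
  have h2 : DifferentiableOn ℝ (iteratedDeriv k F) s := by
    apply h1.differentiableOn
    have : n - k ≠ 0 := by omega
    exact_mod_cast this
  have h3 : DifferentiableAt ℝ (iteratedDeriv k F) y :=
    h2.differentiableAt (hs.mem_nhds hy)
  rw [iteratedDeriv_succ]
  exact h3.hasDerivAt

lemma aux_continuousOn_iteratedDeriv (hF : ContDiffOn ℝ n F s) (hs : IsOpen s) (hk : k ≤ n) :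
    ContinuousOn (iteratedDeriv k F) s :=
  (aux_contDiffOn_iteratedDeriv hF hs hk).continuousOn

end Aux


section Param
variable {μ : Measure ℝ} [IsProbabilityMeasure μ]

lemma aux_ae_mem (hsupp : μ (Set.Icc (0:ℝ) 1)ᶜ = 0) :
    ∀ᵐ t ∂(μ.restrict (Icc (0:ℝ) 1)), t ∈ Icc (0:ℝ) 1 :=
  ae_restrict_mem measurableSet_Icc

lemma aux_restrict_univ (hsupp : μ (Set.Icc (0:ℝ) 1)ᶜ = 0) :
    (μ.restrict (Icc (0:ℝ) 1)) Set.univ = 1 := by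
  rw [Measure.restrict_apply_univ]
  have h1 : μ (Icc (0:ℝ) 1) + μ (Icc (0:ℝ) 1)ᶜ = 1 := by
    rw [measure_add_measure_compl measurableSet_Icc]; exact measure_univ
  simpa [hsupp] using h1

/-- mapsTo: for `t ∈ [0,1]`, `c ∈ [0,1]`, `|u| < δ`, the point `x + (t-c)u ∈ Ioo (x-δ) (x+δ)`. -/
lemma aux_pt_mem {x δ c t u : ℝ} (hδ : 0 < δ) (hc : c ∈ Icc (0:ℝ) 1) (ht : t ∈ Icc (0:ℝ) 1)
    (hu : |u| < δ) : x + (t - c) * u ∈ Ioo (x - δ) (x + δ) := by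
  have h1 : |t - c| ≤ 1 := by
    rw [abs_le]; constructor <;> [nlinarith [hc.1, hc.2, ht.1, ht.2]; nlinarith [hc.1, hc.2, ht.1, ht.2]]
  have h2 : |(t - c) * u| < δ := by
    rw [abs_mul]
    calc |t - c| * |u| ≤ 1 * |u| := by nlinarith [abs_nonneg u]
    _ < δ := by simpa using hu
  rw [abs_lt] at h2
  constructor <;> linarith [h2.1, h2.2]

/-- Differentiation under the integral sign for our parametric integrals. -/
lemma aux_param_hasDerivAt {φ φ' : ℝ → ℝ} {s : Set ℝ} (hs : IsOpen s) {x δ : ℝ} (hδ : 0 < δ)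
    (hK : Icc (x - δ) (x + δ) ⊆ s) {c : ℝ} (hc : c ∈ Icc (0:ℝ) 1)
    (hsupp : μ (Set.Icc (0:ℝ) 1)ᶜ = 0)
    (hφc : ContinuousOn φ s) (hφ'c : ContinuousOn φ' s)
    (hd : ∀ y ∈ s, HasDerivAt φ (φ' y) y) (j : ℕ) :
    ∀ u₀ ∈ ball (0:ℝ) δ,
      HasDerivAt (fun u => ∫ t in Icc (0:ℝ) 1, (t - c) ^ j * φ (x + (t - c) * u) ∂μ)
        (∫ t in Icc (0:ℝ) 1, (t - c) ^ (j + 1) * φ' (x + (t - c) * u₀) ∂μ) u₀ := by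
  intro u₀ hu₀
  rw [mem_ball, dist_zero_right, Real.norm_eq_abs] at hu₀
  set ρ := μ.restrict (Icc (0:ℝ) 1) with hρ
  have hεpos : 0 < δ - |u₀| := by linarith
  -- auxiliary: measurability of integrand for any u with |u| < δ
  have hmeas : ∀ (ψ : ℝ → ℝ), ContinuousOn ψ s → ∀ (i : ℕ) (u : ℝ), |u| < δ →
      AEStronglyMeasurable (fun t => (t - c) ^ i * ψ (x + (t - c) * u)) ρ := by
    intro ψ hψ i u hu
    apply ContinuousOn.aestronglyMeasurable _ measurableSet_Icc
    apply ContinuousOn.mul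
    · exact (continuous_pow i).comp_continuousOn (by fun_prop)
    · apply hψ.comp (by fun_prop)
      intro t ht
      exact (hK (Ioo_subset_Icc_self (aux_pt_mem hδ hc ht hu)))
  -- bound for φ' on the compact K
  obtain ⟨C, hC⟩ : ∃ C, ∀ y ∈ Icc (x - δ) (x + δ), ‖φ' y‖ ≤ C :=
    (isCompact_Icc).exists_bound_of_continuousOn (hφ'c.mono hK)
  have hC0 : 0 ≤ C := le_trans (norm_nonneg _) (hC x (by constructor <;> linarith))
  have key := hasDerivAt_integral_of_dominated_loc_of_deriv_le (μ := ρ)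
    (F := fun u t => (t - c) ^ j * φ (x + (t - c) * u))
    (F' := fun u t => (t - c) ^ (j + 1) * φ' (x + (t - c) * u))
    (x₀ := u₀) (s := ball u₀ (δ - |u₀|)) (bound := fun _ => C) (ball_mem_nhds u₀ hεpos)
    ?_ ?_ ?_ ?_ ?_ ?_
  · exact key.2
  · -- hF_meas
    have : ∀ᶠ u in nhds u₀, |u| < δ := by
      have : ContinuousAt (fun u : ℝ => |u|) u₀ := by fun_prop
      exact this.eventually_lt continuousAt_const hu₀
    exact this.mono fun u hu => hmeas φ hφc j u hu
  · -- integrability at u₀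
    apply ContinuousOn.integrableOn_compact isCompact_Icc
    apply ContinuousOn.mul
    · exact (continuous_pow j).comp_continuousOn (by fun_prop)
    · apply hφc.comp (by fun_prop)
      intro t ht
      exact (hK (Ioo_subset_Icc_self (aux_pt_mem hδ hc ht hu₀)))
  · exact hmeas φ' hφ'c (j+1) u₀ hu₀
  · -- bound
    filter_upwards [aux_ae_mem hsupp] with t ht
    intro u hu
    have hu' : |u| < δ := by
      rw [mem_ball] at hu
      calc |u| = |u₀ + (u - u₀)| := by ring_nf
      _ ≤ |u₀| + |u - u₀| := abs_add_le _ _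
      _ < |u₀| + (δ - |u₀|) := by
          have := hu; rw [Real.dist_eq] at this; linarith
      _ = δ := by ring
    have h1 : |t - c| ≤ 1 := by
      rw [abs_le]; constructor <;> nlinarith [hc.1, hc.2, ht.1, ht.2]
    have h2 : ‖φ' (x + (t - c) * u)‖ ≤ C :=
      hC _ (Ioo_subset_Icc_self (aux_pt_mem hδ hc ht hu'))
    calc ‖(t - c) ^ (j+1) * φ' (x + (t - c) * u)‖
        = |t - c| ^ (j+1) * ‖φ' (x + (t - c) * u)‖ := by
          rw [norm_mul]; simp [abs_pow]
      _ ≤ 1 ^ (j+1) * C := by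
          apply mul_le_mul _ h2 (norm_nonneg _) (by norm_num)
          exact pow_le_pow_left₀ (abs_nonneg _) h1 _
      _ = C := by ring
  · -- bound integrable
    exact integrable_const C
  · -- differentiability in u
    filter_upwards [aux_ae_mem hsupp] with t ht
    intro u hu
    have hu' : |u| < δ := by
      rw [mem_ball, Real.dist_eq] at hu
      have : |u| ≤ |u₀| + |u - u₀| := by
        calc |u| = |u₀ + (u - u₀)| := by ring_nf
        _ ≤ |u₀| + |u - u₀| := abs_add_le _ _
      linarith
    have hmem : x + (t - c) * u ∈ s := hK (Ioo_subset_Icc_self (aux_pt_mem hδ hc ht hu'))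
    have hlin : HasDerivAt (fun u : ℝ => x + (t - c) * u) (t - c) u := by
      simpa using ((hasDerivAt_id u).const_mul (t - c)).const_add x
    have hcomp := (hd _ hmem).comp u hlin
    have := hcomp.const_mul ((t - c) ^ j)
    exact this.congr_deriv (by ring)
end Param

section Param2
variable {μ : Measure ℝ} [IsProbabilityMeasure μ]

lemma aux_param_continuousAt {φ : ℝ → ℝ} {s : Set ℝ} (hs : IsOpen s) {x δ : ℝ} (hδ : 0 < δ)
    (hK : Icc (x - δ) (x + δ) ⊆ s) {c : ℝ} (hc : c ∈ Icc (0:ℝ) 1)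
    (hsupp : μ (Set.Icc (0:ℝ) 1)ᶜ = 0)
    (hφc : ContinuousOn φ s) (j : ℕ) :
    ∀ u₀ ∈ ball (0:ℝ) δ,
      ContinuousAt (fun u => ∫ t in Icc (0:ℝ) 1, (t - c) ^ j * φ (x + (t - c) * u) ∂μ) u₀ := by
  intro u₀ hu₀
  rw [mem_ball, dist_zero_right, Real.norm_eq_abs] at hu₀
  set ρ := μ.restrict (Icc (0:ℝ) 1) with hρ
  obtain ⟨C, hC⟩ : ∃ C, ∀ y ∈ Icc (x - δ) (x + δ), ‖φ y‖ ≤ C :=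
    (isCompact_Icc).exists_bound_of_continuousOn (hφc.mono hK)
  have hev : ∀ᶠ u in nhds u₀, |u| < δ := by
    have : ContinuousAt (fun u : ℝ => |u|) u₀ := by fun_prop
    exact this.eventually_lt continuousAt_const hu₀
  apply continuousAt_of_dominated (bound := fun _ => C)
  · filter_upwards [hev] with u hu
    apply ContinuousOn.aestronglyMeasurable _ measurableSet_Icc
    apply ContinuousOn.mul
    · exact (continuous_pow j).comp_continuousOn (by fun_prop)
    · apply hφc.comp (by fun_prop)
      intro t ht
      exact (hK (Ioo_subset_Icc_self (aux_pt_mem hδ hc ht hu)))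
  · filter_upwards [hev] with u hu
    filter_upwards [aux_ae_mem hsupp] with t ht
    have h1 : |t - c| ≤ 1 := by
      rw [abs_le]; constructor <;> nlinarith [hc.1, hc.2, ht.1, ht.2]
    have h2 : ‖φ (x + (t - c) * u)‖ ≤ C :=
      hC _ (Ioo_subset_Icc_self (aux_pt_mem hδ hc ht hu))
    calc ‖(t - c) ^ j * φ (x + (t - c) * u)‖ = |t - c| ^ j * ‖φ (x + (t - c) * u)‖ := by
          rw [norm_mul]; simp [abs_pow]
      _ ≤ 1 ^ j * C := by
          apply mul_le_mul _ h2 (norm_nonneg _) (by norm_num)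
          exact pow_le_pow_left₀ (abs_nonneg _) h1 _
      _ = C := by ring
  · exact integrable_const C
  · filter_upwards [aux_ae_mem hsupp] with t ht
    apply ContinuousAt.mul continuousAt_const
    have hmem : x + (t - c) * u₀ ∈ s := hK (Ioo_subset_Icc_self (aux_pt_mem hδ hc ht hu₀))
    have : ContinuousAt φ (x + (t - c) * u₀) :=
      (hφc.continuousAt (hs.mem_nhds hmem))
    have hlin : ContinuousAt (fun u : ℝ => x + (t - c) * u) u₀ := by fun_prop
    exact ContinuousAt.comp (g := φ) (f := fun u : ℝ => x + (t - c) * u) this hlin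
end Param2

noncomputable def auxP (μ : Measure ℝ) (F : ℝ → ℝ) (x c : ℝ) (j : ℕ) : ℝ → ℝ :=
  fun u => ∫ t in Icc (0:ℝ) 1, (t - c) ^ j * iteratedDeriv j F (x + (t - c) * u) ∂μ

section ParamBundle
variable {μ : Measure ℝ} [IsProbabilityMeasure μ] {F : ℝ → ℝ} {s : Set ℝ} {x δ c : ℝ}

lemma auxP_hasDerivAt (hs : IsOpen s) (hδ : 0 < δ) (hK : Icc (x - δ) (x + δ) ⊆ s)
    (hc : c ∈ Icc (0:ℝ) 1) (hsupp : μ (Set.Icc (0:ℝ) 1)ᶜ = 0)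
    (hF : ContDiffOn ℝ 4 F s) {j : ℕ} (hj : j < 4) :
    ∀ u ∈ ball (0:ℝ) δ, HasDerivAt (auxP μ F x c j) (auxP μ F x c (j + 1) u) u := by
  apply aux_param_hasDerivAt hs hδ hK hc hsupp
  · exact aux_continuousOn_iteratedDeriv hF hs (by exact_mod_cast hj.le)
  · exact aux_continuousOn_iteratedDeriv hF hs (by exact_mod_cast hj)
  · exact aux_hasDerivAt_iteratedDeriv hF hs (by exact_mod_cast hj)

lemma auxP_continuousAt (hs : IsOpen s) (hδ : 0 < δ) (hK : Icc (x - δ) (x + δ) ⊆ s)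
    (hc : c ∈ Icc (0:ℝ) 1) (hsupp : μ (Set.Icc (0:ℝ) 1)ᶜ = 0)
    (hF : ContDiffOn ℝ 4 F s) {j : ℕ} (hj : j ≤ 4) :
    ∀ u ∈ ball (0:ℝ) δ, ContinuousAt (auxP μ F x c j) u := by
  apply aux_param_continuousAt hs hδ hK hc hsupp
  exact aux_continuousOn_iteratedDeriv hF hs (by exact_mod_cast hj)

lemma auxP_zero (j : ℕ) : auxP μ F x (mom1 μ) j 0 = cmom μ j * iteratedDeriv j F x := by
  unfold auxP cmom
  simp only [mul_zero, add_zero]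
  rw [integral_mul_const]

lemma auxP_contDiffOn (hs : IsOpen s) (hδ : 0 < δ) (hK : Icc (x - δ) (x + δ) ⊆ s)
    (hc : c ∈ Icc (0:ℝ) 1) (hsupp : μ (Set.Icc (0:ℝ) 1)ᶜ = 0)
    (hF : ContDiffOn ℝ 4 F s) :
    ∀ i j : ℕ, i + j ≤ 4 → ContDiffOn ℝ (i : ℕ) (auxP μ F x c j) (ball (0:ℝ) δ) := by
  intro i
  induction i with
  | zero =>
    intro j hj
    rw [show ((0:ℕ) : WithTop ℕ∞) = 0 from rfl, contDiffOn_zero]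
    intro u hu
    exact (auxP_continuousAt hs hδ hK hc hsupp hF (by omega) u hu).continuousWithinAt
  | succ i ih =>
    intro j hj
    rw [show ((i+1:ℕ) : WithTop ℕ∞) = (i:ℕ) + 1 by push_cast; ring,
      contDiffOn_succ_iff_deriv_of_isOpen isOpen_ball]
    refine ⟨?_, ?_, ?_⟩
    · intro u hu
      exact ((auxP_hasDerivAt hs hδ hK hc hsupp hF (by omega) u hu).differentiableAt).differentiableWithinAt
    · intro h
      exact absurd h (by exact_mod_cast WithTop.natCast_ne_top i)
    · apply (ih (j+1) (by omega)).congr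
      intro u hu
      exact (auxP_hasDerivAt hs hδ hK hc hsupp hF (j := j) (by omega) u hu).deriv
end ParamBundle

section Basics
variable {μ : Measure ℝ} [IsProbabilityMeasure μ]

lemma aux_integrable_pow (hsupp : μ (Set.Icc (0:ℝ) 1)ᶜ = 0) (c : ℝ) (j : ℕ) :
    Integrable (fun t => (t - c) ^ j) (μ.restrict (Icc (0:ℝ) 1)) := by
  apply ContinuousOn.integrableOn_compact isCompact_Icc
  fun_prop

lemma aux_mom1_mem (hsupp : μ (Set.Icc (0:ℝ) 1)ᶜ = 0) : mom1 μ ∈ Icc (0:ℝ) 1 := by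
  have hint : Integrable (fun t : ℝ => t) (μ.restrict (Icc (0:ℝ) 1)) := by
    apply ContinuousOn.integrableOn_compact isCompact_Icc; fun_prop
  constructor
  · apply integral_nonneg_of_ae
    filter_upwards [aux_ae_mem hsupp] with t ht using ht.1
  · have h1 : mom1 μ ≤ ∫ _ in Icc (0:ℝ) 1, (1:ℝ) ∂μ := by
      apply integral_mono_ae hint (integrable_const 1)
      filter_upwards [aux_ae_mem hsupp] with t ht using ht.2
    calc mom1 μ ≤ ∫ _ in Icc (0:ℝ) 1, (1:ℝ) ∂μ := h1
    _ = 1 := by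
        rw [integral_const, smul_eq_mul, mul_one, measureReal_def, aux_restrict_univ hsupp, ENNReal.toReal_one]

lemma aux_cmom_zero (hsupp : μ (Set.Icc (0:ℝ) 1)ᶜ = 0) : cmom μ 0 = 1 := by
  unfold cmom
  simp only [pow_zero]
  rw [integral_const, smul_eq_mul, mul_one, measureReal_def, aux_restrict_univ hsupp, ENNReal.toReal_one]

lemma aux_cmom_one (hsupp : μ (Set.Icc (0:ℝ) 1)ᶜ = 0) : cmom μ 1 = 0 := by
  have hint : Integrable (fun t : ℝ => t) (μ.restrict (Icc (0:ℝ) 1)) := by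
    apply ContinuousOn.integrableOn_compact isCompact_Icc; fun_prop
  unfold cmom
  simp only [pow_one]
  rw [integral_sub hint (integrable_const _), integral_const, smul_eq_mul,
    measureReal_def, aux_restrict_univ hsupp, ENNReal.toReal_one, one_mul]
  exact sub_eq_zero_of_eq rfl

end Basics

section Inj

/-- On a preconnected set, a continuous nonvanishing function has constant sign. -/
lemma aux_sign_const {φ : ℝ → ℝ} {I : Set ℝ} (hIconn : I.OrdConnected)
    (hφ : ContinuousOn φ I) (hne : ∀ y ∈ I, φ y ≠ 0) :
    (∀ y ∈ I, 0 < φ y) ∨ (∀ y ∈ I, φ y < 0) := by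
  by_contra hcon
  push_neg at hcon
  obtain ⟨⟨a, ha, ha'⟩, ⟨b, hb, hb'⟩⟩ := hcon
  have ha2 : φ a < 0 := lt_of_le_of_ne ha' (hne a ha)
  have hb2 : 0 < φ b := lt_of_le_of_ne hb' (Ne.symm (hne b hb))
  have hsub : uIcc a b ⊆ I := hIconn.uIcc_subset ha hb
  have h0 : (0:ℝ) ∈ uIcc (φ a) (φ b) := by
    rw [Set.mem_uIcc]; left; exact ⟨ha2.le, hb2.le⟩
  obtain ⟨y, hy, hy0⟩ := intermediate_value_uIcc (hφ.mono hsub) h0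
  exact hne y (hsub hy) hy0

lemma aux_injOn {I : Set ℝ} (hIopen : IsOpen I) (hIconn : I.OrdConnected)
    {f g : ℝ → ℝ} (hfg : ClassC 4 I f g) :
    InjOn (fun y => f y / g y) I := by
  obtain ⟨hf, hg, hgpos, hW⟩ := hfg
  have hconv : Convex ℝ I := hIconn.convex
  have hfd : ∀ y ∈ I, HasDerivAt f (iteratedDeriv 1 f y) y := by
    intro y hy
    have := aux_hasDerivAt_iteratedDeriv hf hIopen (by norm_num : (0:ℕ) < 4) y hy
    simpa [iteratedDeriv_zero] using this
  have hgd : ∀ y ∈ I, HasDerivAt g (iteratedDeriv 1 g y) y := by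
    intro y hy
    have := aux_hasDerivAt_iteratedDeriv hg hIopen (by norm_num : (0:ℕ) < 4) y hy
    simpa [iteratedDeriv_zero] using this
  set φ : ℝ → ℝ := fun y =>
    (iteratedDeriv 1 f y * g y - f y * iteratedDeriv 1 g y) / (g y) ^ 2 with hφdef
  have hdiv : ∀ y ∈ I, HasDerivAt (fun z => f z / g z) (φ y) y := by
    intro y hy
    have := (hfd y hy).div (hgd y hy) (ne_of_gt (hgpos y hy))
    exact this
  have hφcont : ContinuousOn φ I := by
    apply ContinuousOn.div
    · exact ((aux_continuousOn_iteratedDeriv hf hIopen (by norm_num)).mul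
        hg.continuousOn).sub (hf.continuousOn.mul
        (aux_continuousOn_iteratedDeriv hg hIopen (by norm_num)))
    · exact (hg.continuousOn.pow 2)
    · intro y hy
      exact pow_ne_zero 2 (ne_of_gt (hgpos y hy))
  have hφne : ∀ y ∈ I, φ y ≠ 0 := by
    intro y hy
    apply div_ne_zero
    · have := hW y hy
      unfold Wr at this
      simpa [iteratedDeriv_zero] using this
    · exact pow_ne_zero 2 (ne_of_gt (hgpos y hy))
  have hderiv_eq : ∀ y ∈ I, deriv (fun z => f z / g z) y = φ y := fun y hy =>
    (hdiv y hy).deriv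
  have hcont : ContinuousOn (fun z => f z / g z) I :=
    hf.continuousOn.div hg.continuousOn fun y hy => ne_of_gt (hgpos y hy)
  have hint : interior I = I := hIopen.interior_eq
  rcases aux_sign_const hIconn hφcont hφne with hpos | hneg
  · apply StrictMonoOn.injOn
    apply strictMonoOn_of_deriv_pos hconv hcont
    intro y hy
    rw [hint] at hy
    rw [hderiv_eq y hy]
    exact hpos y hy
  · apply StrictAntiOn.injOn
    apply strictAntiOn_of_deriv_neg hconv hcont
    intro y hy
    rw [hint] at hy
    rw [hderiv_eq y hy]
    exact hneg y hy

end Inj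

section WrDeriv
variable {f g : ℝ → ℝ} {I : Set ℝ} {x : ℝ}

lemma aux_hasDerivAt_Wr (hIopen : IsOpen I) (hf : ContDiffOn ℝ 4 f I) (hg : ContDiffOn ℝ 4 g I)
    {i j : ℕ} (hi : i < 4) (hj : j < 4) {y : ℝ} (hy : y ∈ I) :
    HasDerivAt (Wr i j f g)
      (iteratedDeriv (i+1) f y * iteratedDeriv j g y + iteratedDeriv i f y * iteratedDeriv (j+1) g y
        - (iteratedDeriv (j+1) f y * iteratedDeriv i g y
          + iteratedDeriv j f y * iteratedDeriv (i+1) g y)) y := by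
  unfold Wr
  exact ((aux_hasDerivAt_iteratedDeriv hf hIopen hi y hy).mul
      (aux_hasDerivAt_iteratedDeriv hg hIopen hj y hy)).sub
    ((aux_hasDerivAt_iteratedDeriv hf hIopen hj y hy).mul
      (aux_hasDerivAt_iteratedDeriv hg hIopen hi y hy))

lemma aux_continuousAt_Wr (hIopen : IsOpen I) (hf : ContDiffOn ℝ 4 f I) (hg : ContDiffOn ℝ 4 g I)
    {i j : ℕ} (hi : i ≤ 4) (hj : j ≤ 4) {y : ℝ} (hy : y ∈ I) :
    ContinuousAt (Wr i j f g) y := by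
  unfold Wr
  have h1 := (aux_continuousOn_iteratedDeriv hf hIopen hi).continuousAt (hIopen.mem_nhds hy)
  have h2 := (aux_continuousOn_iteratedDeriv hg hIopen hj).continuousAt (hIopen.mem_nhds hy)
  have h3 := (aux_continuousOn_iteratedDeriv hf hIopen hj).continuousAt (hIopen.mem_nhds hy)
  have h4 := (aux_continuousOn_iteratedDeriv hg hIopen hi).continuousAt (hIopen.mem_nhds hy)
  exact (h1.mul h2).sub (h3.mul h4)

end WrDeriv

section Chain
variable {F m : ℝ → ℝ} {I V : Set ℝ}

lemma aux_hasDerivAt_m (hV : IsOpen V) (hm : ContDiffOn ℝ 4 m V) {k : ℕ} (hk : k < 4)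
    {u : ℝ} (hu : u ∈ V) : HasDerivAt (iteratedDeriv k m) (iteratedDeriv (k+1) m u) u :=
  aux_hasDerivAt_iteratedDeriv hm hV hk u hu

lemma aux_T0 (hI : IsOpen I) (hV : IsOpen V) (hF : ContDiffOn ℝ 4 F I)
    (hm : ContDiffOn ℝ 4 m V) (hsub : ∀ u ∈ V, m u ∈ I) {k : ℕ} (hk : k < 4) {u : ℝ}
    (hu : u ∈ V) :
    HasDerivAt (fun v => iteratedDeriv k F (m v))
      (iteratedDeriv (k+1) F (m u) * iteratedDeriv 1 m u) u := by
  have h1 : HasDerivAt m (iteratedDeriv 1 m u) u := by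
    have := aux_hasDerivAt_m hV hm (by norm_num : (0:ℕ) < 4) hu
    simpa [iteratedDeriv_zero] using this
  exact (aux_hasDerivAt_iteratedDeriv hF hI hk (m u) (hsub u hu)).comp u h1

lemma aux_T1 (hI : IsOpen I) (hV : IsOpen V) (hF : ContDiffOn ℝ 4 F I)
    (hm : ContDiffOn ℝ 4 m V) (hsub : ∀ u ∈ V, m u ∈ I) {u : ℝ} (hu : u ∈ V) :
    HasDerivAt (fun v => iteratedDeriv 1 F (m v) * iteratedDeriv 1 m v)
      (iteratedDeriv 2 F (m u) * iteratedDeriv 1 m u ^ 2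
        + iteratedDeriv 1 F (m u) * iteratedDeriv 2 m u) u := by
  have h := (aux_T0 hI hV hF hm hsub (by norm_num : (1:ℕ) < 4) hu).mul
    (aux_hasDerivAt_m hV hm (by norm_num : (1:ℕ) < 4) hu)
  exact h.congr_deriv (by ring)

lemma aux_T2 (hI : IsOpen I) (hV : IsOpen V) (hF : ContDiffOn ℝ 4 F I)
    (hm : ContDiffOn ℝ 4 m V) (hsub : ∀ u ∈ V, m u ∈ I) {u : ℝ} (hu : u ∈ V) :
    HasDerivAt (fun v => iteratedDeriv 2 F (m v) * iteratedDeriv 1 m v ^ 2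
        + iteratedDeriv 1 F (m v) * iteratedDeriv 2 m v)
      (iteratedDeriv 3 F (m u) * iteratedDeriv 1 m u ^ 3
        + 3 * iteratedDeriv 2 F (m u) * iteratedDeriv 1 m u * iteratedDeriv 2 m u
        + iteratedDeriv 1 F (m u) * iteratedDeriv 3 m u) u := by
  have h1 : HasDerivAt (fun v => iteratedDeriv 1 m v ^ 2)
      (2 * iteratedDeriv 1 m u * iteratedDeriv 2 m u) u := by
    have := (aux_hasDerivAt_m hV hm (by norm_num : (1:ℕ) < 4) hu).pow 2
    exact this.congr_deriv (by ring)
  have h := ((aux_T0 hI hV hF hm hsub (by norm_num : (2:ℕ) < 4) hu).mul h1).add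
    ((aux_T0 hI hV hF hm hsub (by norm_num : (1:ℕ) < 4) hu).mul
      (aux_hasDerivAt_m hV hm (by norm_num : (2:ℕ) < 4) hu))
  exact h.congr_deriv (by ring)

lemma aux_T3 (hI : IsOpen I) (hV : IsOpen V) (hF : ContDiffOn ℝ 4 F I)
    (hm : ContDiffOn ℝ 4 m V) (hsub : ∀ u ∈ V, m u ∈ I) {u : ℝ} (hu : u ∈ V) :
    HasDerivAt (fun v => iteratedDeriv 3 F (m v) * iteratedDeriv 1 m v ^ 3
        + 3 * iteratedDeriv 2 F (m v) * iteratedDeriv 1 m v * iteratedDeriv 2 m v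
        + iteratedDeriv 1 F (m v) * iteratedDeriv 3 m v)
      (iteratedDeriv 4 F (m u) * iteratedDeriv 1 m u ^ 4
        + 6 * iteratedDeriv 3 F (m u) * iteratedDeriv 1 m u ^ 2 * iteratedDeriv 2 m u
        + 3 * iteratedDeriv 2 F (m u) * iteratedDeriv 2 m u ^ 2
        + 4 * iteratedDeriv 2 F (m u) * iteratedDeriv 1 m u * iteratedDeriv 3 m u
        + iteratedDeriv 1 F (m u) * iteratedDeriv 4 m u) u := by
  have h1 : HasDerivAt (fun v => iteratedDeriv 1 m v ^ 3)
      (3 * iteratedDeriv 1 m u ^ 2 * iteratedDeriv 2 m u) u := by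
    exact ((aux_hasDerivAt_m hV hm (by norm_num : (1:ℕ) < 4) hu).pow 3).congr_deriv (by simp)
  have hc3 : HasDerivAt (fun v => 3 * iteratedDeriv 2 F (m v))
      (3 * (iteratedDeriv 3 F (m u) * iteratedDeriv 1 m u)) u :=
    (aux_T0 hI hV hF hm hsub (by norm_num : (2:ℕ) < 4) hu).const_mul 3
  have h := (((aux_T0 hI hV hF hm hsub (by norm_num : (3:ℕ) < 4) hu).mul h1).add
    ((hc3.mul (aux_hasDerivAt_m hV hm (by norm_num : (1:ℕ) < 4) hu)).mul
      (aux_hasDerivAt_m hV hm (by norm_num : (2:ℕ) < 4) hu))).add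
    ((aux_T0 hI hV hF hm hsub (by norm_num : (1:ℕ) < 4) hu).mul
      (aux_hasDerivAt_m hV hm (by norm_num : (3:ℕ) < 4) hu))
  exact h.congr_deriv (by simp only [Pi.mul_apply]; ring)

end Chain

set_option maxHeartbeats 4000000 in
/-- The fourth derivative of `m_x` at the origin. -/
theorem statement13 (I : Set ℝ) (hIopen : IsOpen I) (hIne : I.Nonempty)
    (hIconn : I.OrdConnected)
    (f g : ℝ → ℝ) (hfg : ClassC 4 I f g)
    (μ : Measure ℝ) [IsProbabilityMeasure μ] (hsupp : μ (Set.Icc (0:ℝ) 1)ᶜ = 0) :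
    ∀ x ∈ I,
      ContDiffAt ℝ 4 (mfun I f g μ x) 0 ∧
      iteratedDeriv 4 (mfun I f g μ x) 0
        = -3 * cmom μ 2 ^ 2 * (Phi f g x ^ 3 + 2 * Phi f g x * Psi f g x)
          + cmom μ 4 * (iteratedDeriv 2 (Phi f g) x
            + 3 * deriv (Phi f g) x * Phi f g x + Phi f g x ^ 3
            + 2 * Phi f g x * Psi f g x + 2 * deriv (Psi f g) x) := by
  intro x hx
  obtain ⟨hf, hg, hgpos, hWne⟩ := hfg
  have hinj : InjOn (fun y => f y / g y) I := aux_injOn hIopen hIconn ⟨hf, hg, hgpos, hWne⟩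
  have hc : mom1 μ ∈ Icc (0:ℝ) 1 := aux_mom1_mem hsupp
  -- choose δ with Icc (x-δ) (x+δ) ⊆ I
  obtain ⟨ε, hε, hball⟩ := Metric.isOpen_iff.1 hIopen x hx
  set δ : ℝ := ε / 2 with hδdef
  have hδ : 0 < δ := by positivity
  have hK : Icc (x - δ) (x + δ) ⊆ I := by
    intro y hy
    apply hball
    rw [mem_ball, Real.dist_eq, abs_lt]
    constructor <;> [linarith [hy.1]; linarith [hy.2]]
  have hGx : 0 < g x := hgpos x hx
  set c : ℝ := mom1 μ with hcdef
  -- the function h = f/g and its local inverse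
  set hh : ℝ → ℝ := fun y => f y / g y with hhdef
  have hWx : Wr 1 0 f g x ≠ 0 := hWne x hx
  have hWx' : iteratedDeriv 1 f x * g x - f x * iteratedDeriv 1 g x ≠ 0 := by
    have := hWx; unfold Wr at this; simpa [iteratedDeriv_zero] using this
  have hfdx : HasDerivAt f (iteratedDeriv 1 f x) x := by
    have := aux_hasDerivAt_iteratedDeriv hf hIopen (by norm_num : (0:ℕ) < 4) x hx
    simpa [iteratedDeriv_zero] using this
  have hgdx : HasDerivAt g (iteratedDeriv 1 g x) x := by
    have := aux_hasDerivAt_iteratedDeriv hg hIopen (by norm_num : (0:ℕ) < 4) x hx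
    simpa [iteratedDeriv_zero] using this
  have hhd : HasDerivAt hh ((iteratedDeriv 1 f x * g x - f x * iteratedDeriv 1 g x) / g x ^ 2) x :=
    hfdx.div hgdx (ne_of_gt hGx)
  have hhne : (iteratedDeriv 1 f x * g x - f x * iteratedDeriv 1 g x) / g x ^ 2 ≠ 0 :=
    div_ne_zero hWx' (pow_ne_zero 2 (ne_of_gt hGx))
  have hC4h : ContDiffAt ℝ 4 hh x := by
    apply ContDiffAt.div
    · exact hf.contDiffAt (hIopen.mem_nhds hx)
    · exact hg.contDiffAt (hIopen.mem_nhds hx)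
    · exact ne_of_gt hGx
  set e : ℝ ≃L[ℝ] ℝ := ContinuousLinearEquiv.unitsEquivAut ℝ
    (Units.mk0 _ hhne) with hedef
  have hcoe : (e : ℝ →L[ℝ] ℝ) = ContinuousLinearMap.smulRight (1 : ℝ →L[ℝ] ℝ)
      ((iteratedDeriv 1 f x * g x - f x * iteratedDeriv 1 g x) / g x ^ 2) := by
    ext y
    simp [hedef, ContinuousLinearEquiv.unitsEquivAut_apply, mul_comm]
  have hfd : HasFDerivAt hh (e : ℝ →L[ℝ] ℝ) x := by
    rw [hcoe]
    exact hasDerivAt_iff_hasFDerivAt.1 hhd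
  have h14 : (4 : WithTop ℕ∞) ≠ 0 := by norm_num
  have hstrict := hC4h.hasStrictFDerivAt' hfd h14
  set ψ : ℝ → ℝ := hstrict.localInverse hh e x with hψdef
  have hψx : ψ (hh x) = x := hstrict.localInverse_apply_image
  have hrinv : ∀ᶠ y in nhds (hh x), hh (ψ y) = y := hstrict.eventually_right_inverse
  have hψcont : ContinuousAt ψ (hh x) := hstrict.localInverse_continuousAt
  have hψC4 : ContDiffAt ℝ 4 ψ (hh x) := hC4h.to_localInverse hfd h14
  -- the functions P, Q, R
  have hPd : ∀ {j : ℕ}, j < 4 → ∀ u ∈ ball (0:ℝ) δ,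
      HasDerivAt (auxP μ f x c j) (auxP μ f x c (j+1) u) u :=
    fun hj => auxP_hasDerivAt hIopen hδ hK hc hsupp hf hj
  have hQd : ∀ {j : ℕ}, j < 4 → ∀ u ∈ ball (0:ℝ) δ,
      HasDerivAt (auxP μ g x c j) (auxP μ g x c (j+1) u) u :=
    fun hj => auxP_hasDerivAt hIopen hδ hK hc hsupp hg hj
  have hb0 : (0:ℝ) ∈ ball (0:ℝ) δ := mem_ball_self hδ
  have hP00 : auxP μ f x c 0 0 = f x := by
    rw [hcdef, auxP_zero, aux_cmom_zero hsupp]; simp [iteratedDeriv_zero]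
  have hQ00 : auxP μ g x c 0 0 = g x := by
    rw [hcdef, auxP_zero, aux_cmom_zero hsupp]; simp [iteratedDeriv_zero]
  set R : ℝ → ℝ := fun u => auxP μ f x c 0 u / auxP μ g x c 0 u with hRdef
  have hR0 : R 0 = hh x := by rw [hRdef]; simp only; rw [hP00, hQ00]
  have hPC4 : ContDiffAt ℝ 4 (auxP μ f x c 0) 0 :=
    (auxP_contDiffOn hIopen hδ hK hc hsupp hf 4 0 (by norm_num)).contDiffAt
      (isOpen_ball.mem_nhds hb0)
  have hQC4 : ContDiffAt ℝ 4 (auxP μ g x c 0) 0 :=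
    (auxP_contDiffOn hIopen hδ hK hc hsupp hg 4 0 (by norm_num)).contDiffAt
      (isOpen_ball.mem_nhds hb0)
  have hRC4 : ContDiffAt ℝ 4 R 0 := by
    apply hPC4.div hQC4
    rw [hQ00]; exact ne_of_gt hGx
  have hRcont : ContinuousAt R 0 := hRC4.continuousAt
  have hRtends : Filter.Tendsto R (nhds 0) (nhds (hh x)) := by
    rw [← hR0]; exact hRcont.tendsto
  -- identify mfun with ψ ∘ R near 0
  have hmeq : ∀ u, mfun I f g μ x u = Function.invFunOn hh I (R u) := by
    intro u
    unfold mfun Mmean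
    have e1 : (∫ t in Icc (0:ℝ) 1, f (t * (x + (1 - mom1 μ) * u) + (1 - t) * (x - mom1 μ * u)) ∂μ)
        = auxP μ f x c 0 u := by
      unfold auxP
      apply integral_congr_ae
      apply Filter.Eventually.of_forall
      intro t
      show _ = (t - c) ^ 0 * iteratedDeriv 0 _ _
      rw [pow_zero, one_mul, hcdef, iteratedDeriv_zero]
      congr 1
      ring
    have e2 : (∫ t in Icc (0:ℝ) 1, g (t * (x + (1 - mom1 μ) * u) + (1 - t) * (x - mom1 μ * u)) ∂μ)
        = auxP μ g x c 0 u := by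
      unfold auxP
      apply integral_congr_ae
      apply Filter.Eventually.of_forall
      intro t
      show _ = (t - c) ^ 0 * iteratedDeriv 0 _ _
      rw [pow_zero, one_mul, hcdef, iteratedDeriv_zero]
      congr 1
      ring
    rw [e1, e2]
  have hmpsi : mfun I f g μ x =ᶠ[nhds 0] fun u => ψ (R u) := by
    have h1 : ∀ᶠ u in nhds 0, hh (ψ (R u)) = R u := hRtends.eventually hrinv
    have h2 : ∀ᶠ u in nhds 0, ψ (R u) ∈ I := by
      have htend2 : Filter.Tendsto (fun u => ψ (R u)) (nhds 0) (nhds x) := by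
        rw [← hψx]
        exact hψcont.tendsto.comp hRtends
      exact htend2 (hIopen.mem_nhds hx)
    filter_upwards [h1, h2] with u hu1 hu2
    rw [hmeq u]
    have hex : ∃ a ∈ I, hh a = R u := ⟨ψ (R u), hu2, hu1⟩
    refine hinj (Function.invFunOn_mem hex) hu2 ?_
    show hh (Function.invFunOn hh I (R u)) = hh (ψ (R u))
    rw [Function.invFunOn_eq hex, hu1]
  have hmC4 : ContDiffAt ℝ 4 (mfun I f g μ x) 0 := by
    apply ContDiffAt.congr_of_eventuallyEq _ hmpsi
    apply ContDiffAt.comp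
    · rw [hR0]; exact hψC4
    · exact hRC4
  have hm0 : mfun I f g μ x 0 = x := by
    have := hmpsi.eq_of_nhds
    rw [this, hR0, hψx]
  refine ⟨hmC4, ?_⟩
    -- === Part 2: derivative extraction ===
  set M : ℝ → ℝ := mfun I f g μ x with hMdef
  obtain ⟨U, hUnhds, hMCDO⟩ := ContDiffAt.contDiffOn hmC4 (le_refl _) (by simp)
  obtain ⟨V, hVU, hVopen, hV0⟩ := _root_.mem_nhds_iff.1 hUnhds
  have hMV : ContDiffOn ℝ 4 M V := hMCDO.mono hVU
  have hV1open : IsOpen (V ∩ M ⁻¹' I) := hMV.continuousOn.isOpen_inter_preimage hVopen hIopen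
  set V2 : Set ℝ := (V ∩ M ⁻¹' I) ∩ ball 0 δ with hV2def
  have hV2open : IsOpen V2 := hV1open.inter isOpen_ball
  have hV20 : (0:ℝ) ∈ V2 := ⟨⟨hV0, by rw [mem_preimage, hm0]; exact hx⟩, hb0⟩
  have hV2nhds : V2 ∈ nhds (0:ℝ) := hV2open.mem_nhds hV20
  have hMV2 : ContDiffOn ℝ 4 M V2 := hMV.mono (fun u hu => hu.1.1)
  have hsubI : ∀ u ∈ V2, M u ∈ I := fun u hu => hu.1.2
  have hballV2 : ∀ u ∈ V2, u ∈ ball (0:ℝ) δ := fun u hu => hu.2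
  have hEv2 : ∀ᶠ u in nhds (0:ℝ), u ∈ V2 := hV2open.eventually_mem hV20
  -- level-0 identity
  have hQne : ∀ᶠ u in nhds (0:ℝ), auxP μ g x c 0 u ≠ 0 :=
    (auxP_continuousAt hIopen hδ hK hc hsupp hg (by norm_num) 0 hb0).eventually_ne
      (by rw [hQ00]; exact ne_of_gt hGx)
  have hhM : ∀ᶠ u in nhds (0:ℝ), hh (M u) = R u := by
    filter_upwards [hmpsi, hRtends.eventually hrinv] with u h1 h2
    rw [h1]; exact h2
  have H0 : (fun u => iteratedDeriv 0 f (M u) * auxP μ g x c 0 u)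
      =ᶠ[nhds (0:ℝ)] (fun u => iteratedDeriv 0 g (M u) * auxP μ f x c 0 u) := by
    filter_upwards [hhM, hQne, hEv2] with u h1 h2 h3
    have hgMu : g (M u) ≠ 0 := ne_of_gt (hgpos (M u) (hsubI u h3))
    have h4 : f (M u) / g (M u) = auxP μ f x c 0 u / auxP μ g x c 0 u := h1
    rw [div_eq_div_iff hgMu h2] at h4
    simpa [iteratedDeriv_zero, mul_comm] using h4
  -- HasDerivAt chains for A side (f with Q) and B side (g with P)
  have hA0 : ∀ u ∈ V2, HasDerivAt (fun v => iteratedDeriv 0 f (M v) * auxP μ g x c 0 v)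
      (iteratedDeriv 1 f (M u) * iteratedDeriv 1 M u * auxP μ g x c 0 u
        + iteratedDeriv 0 f (M u) * auxP μ g x c 1 u) u := by
    intro u hu
    exact (aux_T0 hIopen hV2open hf hMV2 hsubI (k := 0) (by norm_num) hu).mul
      (hQd (j := 0) (by norm_num) u (hballV2 u hu))
  have hB0 : ∀ u ∈ V2, HasDerivAt (fun v => iteratedDeriv 0 g (M v) * auxP μ f x c 0 v)
      (iteratedDeriv 1 g (M u) * iteratedDeriv 1 M u * auxP μ f x c 0 u
        + iteratedDeriv 0 g (M u) * auxP μ f x c 1 u) u := by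
    intro u hu
    exact (aux_T0 hIopen hV2open hg hMV2 hsubI (k := 0) (by norm_num) hu).mul
      (hPd (j := 0) (by norm_num) u (hballV2 u hu))
  have hA1 : ∀ u ∈ V2, HasDerivAt
      (fun v => iteratedDeriv 1 f (M v) * iteratedDeriv 1 M v * auxP μ g x c 0 v
        + iteratedDeriv 0 f (M v) * auxP μ g x c 1 v)
      ((iteratedDeriv 2 f (M u) * iteratedDeriv 1 M u ^ 2
          + iteratedDeriv 1 f (M u) * iteratedDeriv 2 M u) * auxP μ g x c 0 u
        + 2 * (iteratedDeriv 1 f (M u) * iteratedDeriv 1 M u) * auxP μ g x c 1 u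
        + iteratedDeriv 0 f (M u) * auxP μ g x c 2 u) u := by
    intro u hu
    have h := ((aux_T1 hIopen hV2open hf hMV2 hsubI hu).mul
        (hQd (j := 0) (by norm_num) u (hballV2 u hu))).add
      ((aux_T0 hIopen hV2open hf hMV2 hsubI (k := 0) (by norm_num) hu).mul
        (hQd (j := 1) (by norm_num) u (hballV2 u hu)))
    exact h.congr_deriv (by ring)
  have hB1 : ∀ u ∈ V2, HasDerivAt
      (fun v => iteratedDeriv 1 g (M v) * iteratedDeriv 1 M v * auxP μ f x c 0 v
        + iteratedDeriv 0 g (M v) * auxP μ f x c 1 v)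
      ((iteratedDeriv 2 g (M u) * iteratedDeriv 1 M u ^ 2
          + iteratedDeriv 1 g (M u) * iteratedDeriv 2 M u) * auxP μ f x c 0 u
        + 2 * (iteratedDeriv 1 g (M u) * iteratedDeriv 1 M u) * auxP μ f x c 1 u
        + iteratedDeriv 0 g (M u) * auxP μ f x c 2 u) u := by
    intro u hu
    have h := ((aux_T1 hIopen hV2open hg hMV2 hsubI hu).mul
        (hPd (j := 0) (by norm_num) u (hballV2 u hu))).add
      ((aux_T0 hIopen hV2open hg hMV2 hsubI (k := 0) (by norm_num) hu).mul
        (hPd (j := 1) (by norm_num) u (hballV2 u hu)))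
    exact h.congr_deriv (by ring)
  have hA2 : ∀ u ∈ V2, HasDerivAt
      (fun v => (iteratedDeriv 2 f (M v) * iteratedDeriv 1 M v ^ 2
          + iteratedDeriv 1 f (M v) * iteratedDeriv 2 M v) * auxP μ g x c 0 v
        + 2 * (iteratedDeriv 1 f (M v) * iteratedDeriv 1 M v) * auxP μ g x c 1 v
        + iteratedDeriv 0 f (M v) * auxP μ g x c 2 v)
      ((iteratedDeriv 3 f (M u) * iteratedDeriv 1 M u ^ 3
          + 3 * iteratedDeriv 2 f (M u) * iteratedDeriv 1 M u * iteratedDeriv 2 M u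
          + iteratedDeriv 1 f (M u) * iteratedDeriv 3 M u) * auxP μ g x c 0 u
        + 3 * (iteratedDeriv 2 f (M u) * iteratedDeriv 1 M u ^ 2
          + iteratedDeriv 1 f (M u) * iteratedDeriv 2 M u) * auxP μ g x c 1 u
        + 3 * (iteratedDeriv 1 f (M u) * iteratedDeriv 1 M u) * auxP μ g x c 2 u
        + iteratedDeriv 0 f (M u) * auxP μ g x c 3 u) u := by
    intro u hu
    have h := (((aux_T2 hIopen hV2open hf hMV2 hsubI hu).mul
        (hQd (j := 0) (by norm_num) u (hballV2 u hu))).add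
      (((aux_T1 hIopen hV2open hf hMV2 hsubI hu).const_mul 2).mul
        (hQd (j := 1) (by norm_num) u (hballV2 u hu)))).add
      ((aux_T0 hIopen hV2open hf hMV2 hsubI (k := 0) (by norm_num) hu).mul
        (hQd (j := 2) (by norm_num) u (hballV2 u hu)))
    exact h.congr_deriv (by ring)
  have hB2 : ∀ u ∈ V2, HasDerivAt
      (fun v => (iteratedDeriv 2 g (M v) * iteratedDeriv 1 M v ^ 2
          + iteratedDeriv 1 g (M v) * iteratedDeriv 2 M v) * auxP μ f x c 0 v
        + 2 * (iteratedDeriv 1 g (M v) * iteratedDeriv 1 M v) * auxP μ f x c 1 v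
        + iteratedDeriv 0 g (M v) * auxP μ f x c 2 v)
      ((iteratedDeriv 3 g (M u) * iteratedDeriv 1 M u ^ 3
          + 3 * iteratedDeriv 2 g (M u) * iteratedDeriv 1 M u * iteratedDeriv 2 M u
          + iteratedDeriv 1 g (M u) * iteratedDeriv 3 M u) * auxP μ f x c 0 u
        + 3 * (iteratedDeriv 2 g (M u) * iteratedDeriv 1 M u ^ 2
          + iteratedDeriv 1 g (M u) * iteratedDeriv 2 M u) * auxP μ f x c 1 u
        + 3 * (iteratedDeriv 1 g (M u) * iteratedDeriv 1 M u) * auxP μ f x c 2 u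
        + iteratedDeriv 0 g (M u) * auxP μ f x c 3 u) u := by
    intro u hu
    have h := (((aux_T2 hIopen hV2open hg hMV2 hsubI hu).mul
        (hPd (j := 0) (by norm_num) u (hballV2 u hu))).add
      (((aux_T1 hIopen hV2open hg hMV2 hsubI hu).const_mul 2).mul
        (hPd (j := 1) (by norm_num) u (hballV2 u hu)))).add
      ((aux_T0 hIopen hV2open hg hMV2 hsubI (k := 0) (by norm_num) hu).mul
        (hPd (j := 2) (by norm_num) u (hballV2 u hu)))
    exact h.congr_deriv (by ring)
  have hA3 : ∀ u ∈ V2, HasDerivAt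
      (fun v => (iteratedDeriv 3 f (M v) * iteratedDeriv 1 M v ^ 3
          + 3 * iteratedDeriv 2 f (M v) * iteratedDeriv 1 M v * iteratedDeriv 2 M v
          + iteratedDeriv 1 f (M v) * iteratedDeriv 3 M v) * auxP μ g x c 0 v
        + 3 * (iteratedDeriv 2 f (M v) * iteratedDeriv 1 M v ^ 2
          + iteratedDeriv 1 f (M v) * iteratedDeriv 2 M v) * auxP μ g x c 1 v
        + 3 * (iteratedDeriv 1 f (M v) * iteratedDeriv 1 M v) * auxP μ g x c 2 v
        + iteratedDeriv 0 f (M v) * auxP μ g x c 3 v)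
      ((iteratedDeriv 4 f (M u) * iteratedDeriv 1 M u ^ 4
          + 6 * iteratedDeriv 3 f (M u) * iteratedDeriv 1 M u ^ 2 * iteratedDeriv 2 M u
          + 3 * iteratedDeriv 2 f (M u) * iteratedDeriv 2 M u ^ 2
          + 4 * iteratedDeriv 2 f (M u) * iteratedDeriv 1 M u * iteratedDeriv 3 M u
          + iteratedDeriv 1 f (M u) * iteratedDeriv 4 M u) * auxP μ g x c 0 u
        + 4 * (iteratedDeriv 3 f (M u) * iteratedDeriv 1 M u ^ 3
          + 3 * iteratedDeriv 2 f (M u) * iteratedDeriv 1 M u * iteratedDeriv 2 M u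
          + iteratedDeriv 1 f (M u) * iteratedDeriv 3 M u) * auxP μ g x c 1 u
        + 6 * (iteratedDeriv 2 f (M u) * iteratedDeriv 1 M u ^ 2
          + iteratedDeriv 1 f (M u) * iteratedDeriv 2 M u) * auxP μ g x c 2 u
        + 4 * (iteratedDeriv 1 f (M u) * iteratedDeriv 1 M u) * auxP μ g x c 3 u
        + iteratedDeriv 0 f (M u) * auxP μ g x c 4 u) u := by
    intro u hu
    have h := ((((aux_T3 hIopen hV2open hf hMV2 hsubI hu).mul
        (hQd (j := 0) (by norm_num) u (hballV2 u hu))).add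
      (((aux_T2 hIopen hV2open hf hMV2 hsubI hu).const_mul 3).mul
        (hQd (j := 1) (by norm_num) u (hballV2 u hu)))).add
      ((((aux_T1 hIopen hV2open hf hMV2 hsubI hu).const_mul 3).mul
        (hQd (j := 2) (by norm_num) u (hballV2 u hu))))).add
      ((aux_T0 hIopen hV2open hf hMV2 hsubI (k := 0) (by norm_num) hu).mul
        (hQd (j := 3) (by norm_num) u (hballV2 u hu)))
    exact h.congr_deriv (by ring)
  have hB3 : ∀ u ∈ V2, HasDerivAt
      (fun v => (iteratedDeriv 3 g (M v) * iteratedDeriv 1 M v ^ 3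
          + 3 * iteratedDeriv 2 g (M v) * iteratedDeriv 1 M v * iteratedDeriv 2 M v
          + iteratedDeriv 1 g (M v) * iteratedDeriv 3 M v) * auxP μ f x c 0 v
        + 3 * (iteratedDeriv 2 g (M v) * iteratedDeriv 1 M v ^ 2
          + iteratedDeriv 1 g (M v) * iteratedDeriv 2 M v) * auxP μ f x c 1 v
        + 3 * (iteratedDeriv 1 g (M v) * iteratedDeriv 1 M v) * auxP μ f x c 2 v
        + iteratedDeriv 0 g (M v) * auxP μ f x c 3 v)
      ((iteratedDeriv 4 g (M u) * iteratedDeriv 1 M u ^ 4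
          + 6 * iteratedDeriv 3 g (M u) * iteratedDeriv 1 M u ^ 2 * iteratedDeriv 2 M u
          + 3 * iteratedDeriv 2 g (M u) * iteratedDeriv 2 M u ^ 2
          + 4 * iteratedDeriv 2 g (M u) * iteratedDeriv 1 M u * iteratedDeriv 3 M u
          + iteratedDeriv 1 g (M u) * iteratedDeriv 4 M u) * auxP μ f x c 0 u
        + 4 * (iteratedDeriv 3 g (M u) * iteratedDeriv 1 M u ^ 3
          + 3 * iteratedDeriv 2 g (M u) * iteratedDeriv 1 M u * iteratedDeriv 2 M u
          + iteratedDeriv 1 g (M u) * iteratedDeriv 3 M u) * auxP μ f x c 1 u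
        + 6 * (iteratedDeriv 2 g (M u) * iteratedDeriv 1 M u ^ 2
          + iteratedDeriv 1 g (M u) * iteratedDeriv 2 M u) * auxP μ f x c 2 u
        + 4 * (iteratedDeriv 1 g (M u) * iteratedDeriv 1 M u) * auxP μ f x c 3 u
        + iteratedDeriv 0 g (M u) * auxP μ f x c 4 u) u := by
    intro u hu
    have h := ((((aux_T3 hIopen hV2open hg hMV2 hsubI hu).mul
        (hPd (j := 0) (by norm_num) u (hballV2 u hu))).add
      (((aux_T2 hIopen hV2open hg hMV2 hsubI hu).const_mul 3).mul
        (hPd (j := 1) (by norm_num) u (hballV2 u hu)))).add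
      ((((aux_T1 hIopen hV2open hg hMV2 hsubI hu).const_mul 3).mul
        (hPd (j := 2) (by norm_num) u (hballV2 u hu))))).add
      ((aux_T0 hIopen hV2open hg hMV2 hsubI (k := 0) (by norm_num) hu).mul
        (hPd (j := 3) (by norm_num) u (hballV2 u hu)))
    exact h.congr_deriv (by ring)
    -- chain of eventual equalities
  have H1 : (fun u => iteratedDeriv 1 f (M u) * iteratedDeriv 1 M u * auxP μ g x c 0 u
        + iteratedDeriv 0 f (M u) * auxP μ g x c 1 u)
      =ᶠ[nhds (0:ℝ)] (fun u => iteratedDeriv 1 g (M u) * iteratedDeriv 1 M u * auxP μ f x c 0 u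
        + iteratedDeriv 0 g (M u) * auxP μ f x c 1 u) := by
    have hder := H0.deriv
    filter_upwards [hEv2, hder] with u hu hd
    rw [← (hA0 u hu).deriv, ← (hB0 u hu).deriv]
    exact hd
  have H2 : (fun u => (iteratedDeriv 2 f (M u) * iteratedDeriv 1 M u ^ 2
          + iteratedDeriv 1 f (M u) * iteratedDeriv 2 M u) * auxP μ g x c 0 u
        + 2 * (iteratedDeriv 1 f (M u) * iteratedDeriv 1 M u) * auxP μ g x c 1 u
        + iteratedDeriv 0 f (M u) * auxP μ g x c 2 u)
      =ᶠ[nhds (0:ℝ)] (fun u => (iteratedDeriv 2 g (M u) * iteratedDeriv 1 M u ^ 2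
          + iteratedDeriv 1 g (M u) * iteratedDeriv 2 M u) * auxP μ f x c 0 u
        + 2 * (iteratedDeriv 1 g (M u) * iteratedDeriv 1 M u) * auxP μ f x c 1 u
        + iteratedDeriv 0 g (M u) * auxP μ f x c 2 u) := by
    have hder := H1.deriv
    filter_upwards [hEv2, hder] with u hu hd
    rw [← (hA1 u hu).deriv, ← (hB1 u hu).deriv]
    exact hd
  have H3 : (fun u => (iteratedDeriv 3 f (M u) * iteratedDeriv 1 M u ^ 3
          + 3 * iteratedDeriv 2 f (M u) * iteratedDeriv 1 M u * iteratedDeriv 2 M u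
          + iteratedDeriv 1 f (M u) * iteratedDeriv 3 M u) * auxP μ g x c 0 u
        + 3 * (iteratedDeriv 2 f (M u) * iteratedDeriv 1 M u ^ 2
          + iteratedDeriv 1 f (M u) * iteratedDeriv 2 M u) * auxP μ g x c 1 u
        + 3 * (iteratedDeriv 1 f (M u) * iteratedDeriv 1 M u) * auxP μ g x c 2 u
        + iteratedDeriv 0 f (M u) * auxP μ g x c 3 u)
      =ᶠ[nhds (0:ℝ)] (fun u => (iteratedDeriv 3 g (M u) * iteratedDeriv 1 M u ^ 3
          + 3 * iteratedDeriv 2 g (M u) * iteratedDeriv 1 M u * iteratedDeriv 2 M u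
          + iteratedDeriv 1 g (M u) * iteratedDeriv 3 M u) * auxP μ f x c 0 u
        + 3 * (iteratedDeriv 2 g (M u) * iteratedDeriv 1 M u ^ 2
          + iteratedDeriv 1 g (M u) * iteratedDeriv 2 M u) * auxP μ f x c 1 u
        + 3 * (iteratedDeriv 1 g (M u) * iteratedDeriv 1 M u) * auxP μ f x c 2 u
        + iteratedDeriv 0 g (M u) * auxP μ f x c 3 u) := by
    have hder := H2.deriv
    filter_upwards [hEv2, hder] with u hu hd
    rw [← (hA2 u hu).deriv, ← (hB2 u hu).deriv]
    exact hd
  -- evaluated equations at 0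
  have E1 := H1.eq_of_nhds
  have E2 := H2.eq_of_nhds
  have E4 : (iteratedDeriv 4 f (M 0) * iteratedDeriv 1 M 0 ^ 4
          + 6 * iteratedDeriv 3 f (M 0) * iteratedDeriv 1 M 0 ^ 2 * iteratedDeriv 2 M 0
          + 3 * iteratedDeriv 2 f (M 0) * iteratedDeriv 2 M 0 ^ 2
          + 4 * iteratedDeriv 2 f (M 0) * iteratedDeriv 1 M 0 * iteratedDeriv 3 M 0
          + iteratedDeriv 1 f (M 0) * iteratedDeriv 4 M 0) * auxP μ g x c 0 0
        + 4 * (iteratedDeriv 3 f (M 0) * iteratedDeriv 1 M 0 ^ 3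
          + 3 * iteratedDeriv 2 f (M 0) * iteratedDeriv 1 M 0 * iteratedDeriv 2 M 0
          + iteratedDeriv 1 f (M 0) * iteratedDeriv 3 M 0) * auxP μ g x c 1 0
        + 6 * (iteratedDeriv 2 f (M 0) * iteratedDeriv 1 M 0 ^ 2
          + iteratedDeriv 1 f (M 0) * iteratedDeriv 2 M 0) * auxP μ g x c 2 0
        + 4 * (iteratedDeriv 1 f (M 0) * iteratedDeriv 1 M 0) * auxP μ g x c 3 0
        + iteratedDeriv 0 f (M 0) * auxP μ g x c 4 0
      = (iteratedDeriv 4 g (M 0) * iteratedDeriv 1 M 0 ^ 4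
          + 6 * iteratedDeriv 3 g (M 0) * iteratedDeriv 1 M 0 ^ 2 * iteratedDeriv 2 M 0
          + 3 * iteratedDeriv 2 g (M 0) * iteratedDeriv 2 M 0 ^ 2
          + 4 * iteratedDeriv 2 g (M 0) * iteratedDeriv 1 M 0 * iteratedDeriv 3 M 0
          + iteratedDeriv 1 g (M 0) * iteratedDeriv 4 M 0) * auxP μ f x c 0 0
        + 4 * (iteratedDeriv 3 g (M 0) * iteratedDeriv 1 M 0 ^ 3
          + 3 * iteratedDeriv 2 g (M 0) * iteratedDeriv 1 M 0 * iteratedDeriv 2 M 0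
          + iteratedDeriv 1 g (M 0) * iteratedDeriv 3 M 0) * auxP μ f x c 1 0
        + 6 * (iteratedDeriv 2 g (M 0) * iteratedDeriv 1 M 0 ^ 2
          + iteratedDeriv 1 g (M 0) * iteratedDeriv 2 M 0) * auxP μ f x c 2 0
        + 4 * (iteratedDeriv 1 g (M 0) * iteratedDeriv 1 M 0) * auxP μ f x c 3 0
        + iteratedDeriv 0 g (M 0) * auxP μ f x c 4 0 := by
    have hd := H3.deriv_eq (x := 0)
    rw [(hA3 0 hV20).deriv, (hB3 0 hV20).deriv] at hd
    exact hd
  -- plug in values at 0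
  have hPz : ∀ j, auxP μ f x c j 0 = cmom μ j * iteratedDeriv j f x := by
    intro j; rw [hcdef]; exact auxP_zero j
  have hQz : ∀ j, auxP μ g x c j 0 = cmom μ j * iteratedDeriv j g x := by
    intro j; rw [hcdef]; exact auxP_zero j
  simp only [hm0, hPz, hQz, aux_cmom_zero hsupp, aux_cmom_one hsupp] at E1 E2 E4
  have hWx2 : iteratedDeriv 1 f x * iteratedDeriv 0 g x
      - iteratedDeriv 0 f x * iteratedDeriv 1 g x ≠ 0 := hWx
  have ha1 : iteratedDeriv 1 M 0 = 0 := by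
    have hz : (iteratedDeriv 1 f x * iteratedDeriv 0 g x
        - iteratedDeriv 0 f x * iteratedDeriv 1 g x) * iteratedDeriv 1 M 0 = 0 := by
      linear_combination E1
    exact (mul_eq_zero.mp hz).resolve_left hWx2
  rw [ha1] at E2 E4
  have ha2 : (iteratedDeriv 1 f x * iteratedDeriv 0 g x
        - iteratedDeriv 0 f x * iteratedDeriv 1 g x) * iteratedDeriv 2 M 0
      = cmom μ 2 * (iteratedDeriv 2 f x * iteratedDeriv 0 g x
        - iteratedDeriv 0 f x * iteratedDeriv 2 g x) := by
    linear_combination E2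
  have ha4 : (iteratedDeriv 1 f x * iteratedDeriv 0 g x
        - iteratedDeriv 0 f x * iteratedDeriv 1 g x) * iteratedDeriv 4 M 0
      = cmom μ 4 * (iteratedDeriv 4 f x * iteratedDeriv 0 g x
          - iteratedDeriv 0 f x * iteratedDeriv 4 g x)
        + 6 * cmom μ 2 * iteratedDeriv 2 M 0 * (iteratedDeriv 2 f x * iteratedDeriv 1 g x
          - iteratedDeriv 1 f x * iteratedDeriv 2 g x)
        + 3 * iteratedDeriv 2 M 0 ^ 2 * (iteratedDeriv 0 f x * iteratedDeriv 2 g x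
          - iteratedDeriv 2 f x * iteratedDeriv 0 g x) := by
    linear_combination E4
    -- derivatives of Phi and Psi at x
  have hdF : ∀ {k : ℕ}, k < 4 → HasDerivAt (iteratedDeriv k f) (iteratedDeriv (k+1) f x) x :=
    fun hk => aux_hasDerivAt_iteratedDeriv hf hIopen hk x hx
  have hdG : ∀ {k : ℕ}, k < 4 → HasDerivAt (iteratedDeriv k g) (iteratedDeriv (k+1) g x) x :=
    fun hk => aux_hasDerivAt_iteratedDeriv hg hIopen hk x hx
  have hN := aux_hasDerivAt_Wr hIopen hf hg (i := 2) (j := 0) (by norm_num) (by norm_num) hx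
  have hD := aux_hasDerivAt_Wr hIopen hf hg (i := 1) (j := 0) (by norm_num) (by norm_num) hx
  have hMq := aux_hasDerivAt_Wr hIopen hf hg (i := 2) (j := 1) (by norm_num) (by norm_num) hx
  have hPhiD : HasDerivAt (Phi f g)
      (((iteratedDeriv 3 f x * iteratedDeriv 0 g x + iteratedDeriv 2 f x * iteratedDeriv 1 g x
          - (iteratedDeriv 1 f x * iteratedDeriv 2 g x + iteratedDeriv 0 f x * iteratedDeriv 3 g x))
          * Wr 1 0 f g x
        - Wr 2 0 f g x * (iteratedDeriv 2 f x * iteratedDeriv 0 g x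
          + iteratedDeriv 1 f x * iteratedDeriv 1 g x
          - (iteratedDeriv 1 f x * iteratedDeriv 1 g x
            + iteratedDeriv 0 f x * iteratedDeriv 2 g x)))
        / Wr 1 0 f g x ^ 2) x := hN.div hD hWx
  have hPsiD : HasDerivAt (Psi f g)
      (-(((iteratedDeriv 3 f x * iteratedDeriv 1 g x + iteratedDeriv 2 f x * iteratedDeriv 2 g x
          - (iteratedDeriv 2 f x * iteratedDeriv 2 g x + iteratedDeriv 1 f x * iteratedDeriv 3 g x))
          * Wr 1 0 f g x
        - Wr 2 1 f g x * (iteratedDeriv 2 f x * iteratedDeriv 0 g x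
          + iteratedDeriv 1 f x * iteratedDeriv 1 g x
          - (iteratedDeriv 1 f x * iteratedDeriv 1 g x
            + iteratedDeriv 0 f x * iteratedDeriv 2 g x)))
        / Wr 1 0 f g x ^ 2)) x := (hMq.div hD hWx).neg
  -- second derivative of Phi
  have hI_ev : ∀ᶠ y in nhds x, y ∈ I := hIopen.eventually_mem hx
  have hD_ev : ∀ᶠ y in nhds x, Wr 1 0 f g y ≠ 0 :=
    (aux_continuousAt_Wr hIopen hf hg (by norm_num) (by norm_num) hx).eventually_ne hWx
  have hPhi1_ev : deriv (Phi f g) =ᶠ[nhds x] (fun y =>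
      ((iteratedDeriv 3 f y * iteratedDeriv 0 g y + iteratedDeriv 2 f y * iteratedDeriv 1 g y
          - (iteratedDeriv 1 f y * iteratedDeriv 2 g y + iteratedDeriv 0 f y * iteratedDeriv 3 g y))
          * Wr 1 0 f g y
        - Wr 2 0 f g y * (iteratedDeriv 2 f y * iteratedDeriv 0 g y
          + iteratedDeriv 1 f y * iteratedDeriv 1 g y
          - (iteratedDeriv 1 f y * iteratedDeriv 1 g y
            + iteratedDeriv 0 f y * iteratedDeriv 2 g y)))
        / Wr 1 0 f g y ^ 2) := by
    filter_upwards [hI_ev, hD_ev] with y hy hDy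
    exact HasDerivAt.deriv
      ((aux_hasDerivAt_Wr hIopen hf hg (i := 2) (j := 0) (by norm_num) (by norm_num) hy).div
        (aux_hasDerivAt_Wr hIopen hf hg (i := 1) (j := 0) (by norm_num) (by norm_num) hy) hDy)
  -- HasDerivAt for the explicit first-derivative function of Phi
  have hdN : HasDerivAt (fun y => iteratedDeriv 3 f y * iteratedDeriv 0 g y
      + iteratedDeriv 2 f y * iteratedDeriv 1 g y
      - (iteratedDeriv 1 f y * iteratedDeriv 2 g y + iteratedDeriv 0 f y * iteratedDeriv 3 g y))
      ((iteratedDeriv 4 f x * iteratedDeriv 0 g x + iteratedDeriv 3 f x * iteratedDeriv 1 g x)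
        + (iteratedDeriv 3 f x * iteratedDeriv 1 g x + iteratedDeriv 2 f x * iteratedDeriv 2 g x)
        - ((iteratedDeriv 2 f x * iteratedDeriv 2 g x + iteratedDeriv 1 f x * iteratedDeriv 3 g x)
          + (iteratedDeriv 1 f x * iteratedDeriv 3 g x
            + iteratedDeriv 0 f x * iteratedDeriv 4 g x))) x := by
    exact (((hdF (by norm_num)).mul (hdG (by norm_num))).add
      ((hdF (by norm_num)).mul (hdG (by norm_num)))).sub
      ((((hdF (by norm_num)).mul (hdG (by norm_num))).add
        ((hdF (by norm_num)).mul (hdG (by norm_num)))))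
  have hdD : HasDerivAt (fun y => iteratedDeriv 2 f y * iteratedDeriv 0 g y
      + iteratedDeriv 1 f y * iteratedDeriv 1 g y
      - (iteratedDeriv 1 f y * iteratedDeriv 1 g y + iteratedDeriv 0 f y * iteratedDeriv 2 g y))
      ((iteratedDeriv 3 f x * iteratedDeriv 0 g x + iteratedDeriv 2 f x * iteratedDeriv 1 g x)
        + (iteratedDeriv 2 f x * iteratedDeriv 1 g x + iteratedDeriv 1 f x * iteratedDeriv 2 g x)
        - ((iteratedDeriv 2 f x * iteratedDeriv 1 g x + iteratedDeriv 1 f x * iteratedDeriv 2 g x)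
          + (iteratedDeriv 1 f x * iteratedDeriv 2 g x
            + iteratedDeriv 0 f x * iteratedDeriv 3 g x))) x := by
    exact (((hdF (by norm_num)).mul (hdG (by norm_num))).add
      ((hdF (by norm_num)).mul (hdG (by norm_num)))).sub
      ((((hdF (by norm_num)).mul (hdG (by norm_num))).add
        ((hdF (by norm_num)).mul (hdG (by norm_num)))))
  have hPhi1d := ((hdN.mul hD).sub (hN.mul hdD)).div (hD.pow 2) (pow_ne_zero 2 hWx)
  have hPhi2 : iteratedDeriv 2 (Phi f g) x = deriv (fun y =>
      ((iteratedDeriv 3 f y * iteratedDeriv 0 g y + iteratedDeriv 2 f y * iteratedDeriv 1 g y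
          - (iteratedDeriv 1 f y * iteratedDeriv 2 g y + iteratedDeriv 0 f y * iteratedDeriv 3 g y))
          * Wr 1 0 f g y
        - Wr 2 0 f g y * (iteratedDeriv 2 f y * iteratedDeriv 0 g y
          + iteratedDeriv 1 f y * iteratedDeriv 1 g y
          - (iteratedDeriv 1 f y * iteratedDeriv 1 g y
            + iteratedDeriv 0 f y * iteratedDeriv 2 g y)))
        / Wr 1 0 f g y ^ 2) x := by
    rw [show (2:ℕ) = 1 + 1 from rfl, iteratedDeriv_succ, iteratedDeriv_one]
    exact hPhi1_ev.deriv_eq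
  have hPhi2' := hPhi2.trans hPhi1d.deriv
  -- final algebra
  have hW10 : Wr 1 0 f g x = iteratedDeriv 1 f x * iteratedDeriv 0 g x
      - iteratedDeriv 0 f x * iteratedDeriv 1 g x := rfl
  have hW20 : Wr 2 0 f g x = iteratedDeriv 2 f x * iteratedDeriv 0 g x
      - iteratedDeriv 0 f x * iteratedDeriv 2 g x := rfl
  have hW21 : Wr 2 1 f g x = iteratedDeriv 2 f x * iteratedDeriv 1 g x
      - iteratedDeriv 1 f x * iteratedDeriv 2 g x := rfl
  have hPhival : Phi f g x = Wr 2 0 f g x / Wr 1 0 f g x := rfl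
  have hPsival : Psi f g x = -(Wr 2 1 f g x / Wr 1 0 f g x) := rfl
  have ha4' : iteratedDeriv 4 M 0
      = (cmom μ 4 * (iteratedDeriv 4 f x * iteratedDeriv 0 g x
          - iteratedDeriv 0 f x * iteratedDeriv 4 g x)
        + 6 * cmom μ 2 * iteratedDeriv 2 M 0 * (iteratedDeriv 2 f x * iteratedDeriv 1 g x
          - iteratedDeriv 1 f x * iteratedDeriv 2 g x)
        + 3 * iteratedDeriv 2 M 0 ^ 2 * (iteratedDeriv 0 f x * iteratedDeriv 2 g x
          - iteratedDeriv 2 f x * iteratedDeriv 0 g x))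
        / (iteratedDeriv 1 f x * iteratedDeriv 0 g x
          - iteratedDeriv 0 f x * iteratedDeriv 1 g x) := by
    rw [eq_div_iff hWx2]
    linear_combination ha4
  have ha2' : iteratedDeriv 2 M 0
      = cmom μ 2 * (iteratedDeriv 2 f x * iteratedDeriv 0 g x
          - iteratedDeriv 0 f x * iteratedDeriv 2 g x)
        / (iteratedDeriv 1 f x * iteratedDeriv 0 g x
          - iteratedDeriv 0 f x * iteratedDeriv 1 g x) := by
    rw [eq_div_iff hWx2]
    linear_combination ha2
  simp only [Pi.sub_apply, Pi.mul_apply, Pi.pow_apply] at hPhi2'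
  rw [ha4', ha2', hPhival, hPsival, hPhiD.deriv, hPsiD.deriv, hPhi2', hW10, hW20, hW21]
  have hW' : deriv f x * g x - f x * deriv g x ≠ 0 := by
    simpa [iteratedDeriv_one, iteratedDeriv_zero] using hWx2
  simp only [iteratedDeriv_one, iteratedDeriv_zero, Nat.reduceAdd, Nat.reduceSub, Nat.cast_ofNat, pow_one]
  have hW3 : g x * deriv f x - f x * deriv g x ≠ 0 := by
    intro h; apply hW'; linarith
  field_simp [hW', hW3]
  ring
end AuxIter
end

section
/- Let n ≥ 2 be an integer and (f,g) ∈ C_n(I). Define sequences of functions (φ_i) and (ψ_i) on I by the recursions φ₀ := 0, ψ₀ := 1, and for i ∈ {0,…,n−1}: φ_{i+1} := φ_i' + φ_i·Φ_{f,g} + ψ_i and ψ_{i+1} := φ_i·Ψ_{f,g} + ψ_i'. Then for each h ∈ {f,g} and each i ∈ {0,…,n}, the identity h^{(i)} = φ_i·h' + ψ_i·h holds on I. -/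
open MeasureTheory Set

/-- Representation of higher derivatives via the recursive sequences `(φᵢ)`, `(ψᵢ)`. -/
theorem statement16 (I : Set ℝ) (hIopen : IsOpen I) (hIne : I.Nonempty)
    (hIconn : I.OrdConnected)
    (n : ℕ) (hn : 2 ≤ n) (f g : ℝ → ℝ) (hfg : ClassC n I f g)
    (φ ψ : ℕ → ℝ → ℝ)
    (hφ0 : ∀ x ∈ I, φ 0 x = 0) (hψ0 : ∀ x ∈ I, ψ 0 x = 1)
    (hrec : ∀ i < n, ∀ x ∈ I,
      φ (i + 1) x = deriv (φ i) x + φ i x * Phi f g x + ψ i x ∧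
      ψ (i + 1) x = φ i x * Psi f g x + deriv (ψ i) x) :
    ∀ i ≤ n, ∀ x ∈ I,
      iteratedDeriv i f x = φ i x * deriv f x + ψ i x * f x ∧
      iteratedDeriv i g x = φ i x * deriv g x + ψ i x * g x := by
  obtain ⟨hf, hg, hgpos, hW⟩ := hfg
  have hnhds : ∀ x ∈ I, I ∈ nhds x := fun x hx => hIopen.mem_nhds hx
  have hit2 : ∀ h : ℝ → ℝ, iteratedDeriv 2 h = deriv (deriv h) := by
    intro h
    rw [show (2:ℕ) = 1 + 1 from rfl, iteratedDeriv_succ, iteratedDeriv_one]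
  have hfd1n : ContDiffOn ℝ ((n - 1 : ℕ)) (deriv f) I :=
    hf.deriv_of_isOpen hIopen (by exact_mod_cast (by omega : n - 1 + 1 ≤ n))
  have hgd1n : ContDiffOn ℝ ((n - 1 : ℕ)) (deriv g) I :=
    hg.deriv_of_isOpen hIopen (by exact_mod_cast (by omega : n - 1 + 1 ≤ n))
  have hfd2 : ContDiffOn ℝ ((n - 2 : ℕ)) (deriv (deriv f)) I :=
    hfd1n.deriv_of_isOpen hIopen (by exact_mod_cast (by omega : n - 2 + 1 ≤ n - 1))
  have hgd2 : ContDiffOn ℝ ((n - 2 : ℕ)) (deriv (deriv g)) I :=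
    hgd1n.deriv_of_isOpen hIopen (by exact_mod_cast (by omega : n - 2 + 1 ≤ n - 1))
  have hfd1 : ContDiffOn ℝ ((n - 2 : ℕ)) (deriv f) I :=
    hfd1n.of_le (by exact_mod_cast Nat.sub_le_sub_left (by omega) n)
  have hgd1 : ContDiffOn ℝ ((n - 2 : ℕ)) (deriv g) I :=
    hgd1n.of_le (by exact_mod_cast Nat.sub_le_sub_left (by omega) n)
  have hf0 : ContDiffOn ℝ ((n - 2 : ℕ)) f I := hf.of_le (by exact_mod_cast Nat.sub_le n 2)
  have hg0 : ContDiffOn ℝ ((n - 2 : ℕ)) g I := hg.of_le (by exact_mod_cast Nat.sub_le n 2)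
  have hWne : ∀ x ∈ I, deriv f x * g x - f x * deriv g x ≠ 0 := by
    intro x hx
    have := hW x hx
    simpa [Wr, iteratedDeriv_one, iteratedDeriv_zero] using this
  have hPhi : ContDiffOn ℝ ((n - 2 : ℕ)) (Phi f g) I := by
    have h20 : ContDiffOn ℝ ((n - 2 : ℕ)) (Wr 2 0 f g) I :=
      ((hfd2.mul hg0).sub (hf0.mul hgd2)).congr
        (fun x _ => by simp [Wr, hit2, iteratedDeriv_zero])
    have h10 : ContDiffOn ℝ ((n - 2 : ℕ)) (Wr 1 0 f g) I :=
      ((hfd1.mul hg0).sub (hf0.mul hgd1)).congr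
        (fun x _ => by simp [Wr, iteratedDeriv_one, iteratedDeriv_zero])
    exact h20.div h10 (fun x hx => hW x hx)
  have hPsi : ContDiffOn ℝ ((n - 2 : ℕ)) (Psi f g) I := by
    have h21 : ContDiffOn ℝ ((n - 2 : ℕ)) (Wr 2 1 f g) I :=
      ((hfd2.mul hgd1).sub (hfd1.mul hgd2)).congr
        (fun x _ => by simp [Wr, hit2, iteratedDeriv_one])
    have h10 : ContDiffOn ℝ ((n - 2 : ℕ)) (Wr 1 0 f g) I :=
      ((hfd1.mul hg0).sub (hf0.mul hgd1)).congr
        (fun x _ => by simp [Wr, iteratedDeriv_one, iteratedDeriv_zero])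
    exact (h21.div h10 (fun x hx => hW x hx)).neg
  -- the key second-order ODE: h'' = Φ h' + Ψ h for h ∈ {f, g}
  have hODEf : ∀ x ∈ I, deriv (deriv f) x
      = Phi f g x * deriv f x + Psi f g x * f x := by
    intro x hx
    have hw := hWne x hx
    have hw' : g x * deriv f x - f x * deriv g x ≠ 0 := by rwa [mul_comm (g x)]
    simp only [Phi, Psi, Wr, iteratedDeriv_one, iteratedDeriv_zero, hit2]
    field_simp
    ring
  have hODEg : ∀ x ∈ I, deriv (deriv g) x
      = Phi f g x * deriv g x + Psi f g x * g x := by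
    intro x hx
    have hw := hWne x hx
    have hw' : g x * deriv f x - f x * deriv g x ≠ 0 := by rwa [mul_comm (g x)]
    simp only [Phi, Psi, Wr, iteratedDeriv_one, iteratedDeriv_zero, hit2]
    field_simp
    ring
  -- key invariant, for 1 ≤ i ≤ n
  have key : ∀ i, 1 ≤ i → i ≤ n → ∃ p q : ℝ → ℝ,
      ContDiffOn ℝ ((n - i : ℕ)) p I ∧ ContDiffOn ℝ ((n - i : ℕ)) q I ∧
      (∀ x ∈ I, φ i x = p x) ∧ (∀ x ∈ I, ψ i x = q x) ∧
      (∀ x ∈ I, iteratedDeriv i f x = p x * deriv f x + q x * f x) ∧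
      (∀ x ∈ I, iteratedDeriv i g x = p x * deriv g x + q x * g x) := by
    intro i h1
    induction i, h1 using Nat.le_induction with
    | base =>
      intro _
      refine ⟨fun _ => 1, fun _ => 0, contDiffOn_const, contDiffOn_const, ?_, ?_, ?_, ?_⟩
      · intro x hx
        have h0 : deriv (φ 0) x = 0 := by
          have heq : φ 0 =ᶠ[nhds x] fun _ => (0:ℝ) :=
            Filter.eventuallyEq_of_mem (hnhds x hx) (fun y hy => hφ0 y hy)
          rw [heq.deriv_eq]; simp
        rw [(hrec 0 (by omega) x hx).1, h0, hφ0 x hx, hψ0 x hx]; ring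
      · intro x hx
        have h0 : deriv (ψ 0) x = 0 := by
          have heq : ψ 0 =ᶠ[nhds x] fun _ => (1:ℝ) :=
            Filter.eventuallyEq_of_mem (hnhds x hx) (fun y hy => hψ0 y hy)
          rw [heq.deriv_eq]; simp
        rw [(hrec 0 (by omega) x hx).2, h0, hφ0 x hx]; ring
      · intro x hx; simp [iteratedDeriv_one]
      · intro x hx; simp [iteratedDeriv_one]
    | succ i h1i ih =>
      intro hi
      have hin : i < n := by omega
      obtain ⟨p, q, hpC, hqC, hpφ, hqψ, hpf, hpg⟩ := ih (by omega)
      have hle1 : (1 : WithTop ℕ∞) ≤ ((n - i : ℕ) : WithTop ℕ∞) := by exact_mod_cast (by omega : 1 ≤ n - i)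
      have hpd : DifferentiableOn ℝ p I := hpC.differentiableOn (by exact_mod_cast (by omega : n - i ≠ 0))
      have hqd : DifferentiableOn ℝ q I := hqC.differentiableOn (by exact_mod_cast (by omega : n - i ≠ 0))
      have hle2 : ((n - (i+1) : ℕ) : WithTop ℕ∞) ≤ ((n - 2 : ℕ) : WithTop ℕ∞) := by
        exact_mod_cast Nat.sub_le_sub_left (by omega) n
      have hle3 : ((n - (i+1) : ℕ) : WithTop ℕ∞) ≤ ((n - i : ℕ) : WithTop ℕ∞) := by
        exact_mod_cast Nat.sub_le_sub_left (by omega) n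
      refine ⟨fun x => deriv p x + p x * Phi f g x + q x,
        fun x => p x * Psi f g x + deriv q x, ?_, ?_, ?_, ?_, ?_, ?_⟩
      · exact ((hpC.deriv_of_isOpen hIopen
          (by exact_mod_cast (by omega : n - (i+1) + 1 ≤ n - i))).add
          ((hpC.of_le hle3).mul (hPhi.of_le hle2))).add (hqC.of_le hle3)
      · exact ((hpC.of_le hle3).mul (hPsi.of_le hle2)).add
          (hqC.deriv_of_isOpen hIopen
            (by exact_mod_cast (by omega : n - (i+1) + 1 ≤ n - i)))
      · intro x hx
        have hdp : deriv (φ i) x = deriv p x :=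
          (Filter.eventuallyEq_of_mem (hnhds x hx) (fun y hy => hpφ y hy)).deriv_eq
        rw [(hrec i hin x hx).1, hdp, hpφ x hx, hqψ x hx]
      · intro x hx
        have hdq : deriv (ψ i) x = deriv q x :=
          (Filter.eventuallyEq_of_mem (hnhds x hx) (fun y hy => hqψ y hy)).deriv_eq
        rw [(hrec i hin x hx).2, hdq, hpφ x hx]
      · intro x hx
        have hfd : DifferentiableAt ℝ f x :=
          (hf.differentiableOn (by exact_mod_cast (by omega : n ≠ 0))).differentiableAt
            (hnhds x hx)
        have hfd' : DifferentiableAt ℝ (deriv f) x :=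
          (hfd1n.differentiableOn
            (by exact_mod_cast (by omega : n - 1 ≠ 0))).differentiableAt (hnhds x hx)
        have hpa : DifferentiableAt ℝ p x := (hpd x hx).differentiableAt (hnhds x hx)
        have hqa : DifferentiableAt ℝ q x := (hqd x hx).differentiableAt (hnhds x hx)
        have heq : iteratedDeriv (i+1) f x
            = deriv (fun y => p y * deriv f y + q y * f y) x := by
          rw [iteratedDeriv_succ]
          exact (Filter.eventuallyEq_of_mem (hnhds x hx) (fun y hy => hpf y hy)).deriv_eq
        rw [heq, deriv_fun_add (hpa.fun_mul hfd') (hqa.fun_mul hfd), deriv_fun_mul hpa hfd',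
          deriv_fun_mul hqa hfd, hODEf x hx]
        ring
      · intro x hx
        have hfd : DifferentiableAt ℝ g x :=
          (hg.differentiableOn (by exact_mod_cast (by omega : n ≠ 0))).differentiableAt
            (hnhds x hx)
        have hfd' : DifferentiableAt ℝ (deriv g) x :=
          (hgd1n.differentiableOn
            (by exact_mod_cast (by omega : n - 1 ≠ 0))).differentiableAt (hnhds x hx)
        have hpa : DifferentiableAt ℝ p x := (hpd x hx).differentiableAt (hnhds x hx)
        have hqa : DifferentiableAt ℝ q x := (hqd x hx).differentiableAt (hnhds x hx)
        have heq : iteratedDeriv (i+1) g x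
            = deriv (fun y => p y * deriv g y + q y * g y) x := by
          rw [iteratedDeriv_succ]
          exact (Filter.eventuallyEq_of_mem (hnhds x hx) (fun y hy => hpg y hy)).deriv_eq
        rw [heq, deriv_fun_add (hpa.fun_mul hfd') (hqa.fun_mul hfd), deriv_fun_mul hpa hfd',
          deriv_fun_mul hqa hfd, hODEg x hx]
        ring
  intro i hi x hx
  rcases Nat.eq_zero_or_pos i with rfl | hpos
  · constructor <;> simp [iteratedDeriv_zero, hφ0 x hx, hψ0 x hx]
  · obtain ⟨p, q, _, _, hpφ, hqψ, hpf, hpg⟩ := key i hpos hi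
    rw [hpφ x hx, hqψ x hx]
    exact ⟨hpf x hx, hpg x hx⟩
end

section
/- Let n ≥ 2 be an integer and (f,g) ∈ C_n(I). Define sequences of functions (φ_i) and (ψ_i) on I by the recursions φ₀ := 0, ψ₀ := 1, and for i ∈ {0,…,n−1}: φ_{i+1} := φ_i' + φ_i·Φ_{f,g} + ψ_i and ψ_{i+1} := φ_i·Ψ_{f,g} + ψ_i'. Then for all i,j ∈ {0,…,n}, the Wronskian identity W^{i,j}_{f,g} = (φ_i·ψ_j − φ_j·ψ_i)·W^{1,0}_{f,g} holds on I; in particular, W^{i,0}_{f,g} = φ_i·W^{1,0}_{f,g} and W^{i,1}_{f,g} = −ψ_i·W^{1,0}_{f,g} for all i ∈ {0,…,n}. -/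
open MeasureTheory Set

/-- Wronskian identities via the recursive sequences `(φᵢ)`, `(ψᵢ)`. -/
theorem statement17 (I : Set ℝ) (hIopen : IsOpen I) (hIne : I.Nonempty)
    (hIconn : I.OrdConnected)
    (n : ℕ) (hn : 2 ≤ n) (f g : ℝ → ℝ) (hfg : ClassC n I f g)
    (φ ψ : ℕ → ℝ → ℝ)
    (hφ0 : ∀ x ∈ I, φ 0 x = 0) (hψ0 : ∀ x ∈ I, ψ 0 x = 1)
    (hrec : ∀ i < n, ∀ x ∈ I,
      φ (i + 1) x = deriv (φ i) x + φ i x * Phi f g x + ψ i x ∧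
      ψ (i + 1) x = φ i x * Psi f g x + deriv (ψ i) x) :
    (∀ i ≤ n, ∀ j ≤ n, ∀ x ∈ I,
      Wr i j f g x = (φ i x * ψ j x - φ j x * ψ i x) * Wr 1 0 f g x) ∧
    (∀ i ≤ n, ∀ x ∈ I,
      Wr i 0 f g x = φ i x * Wr 1 0 f g x ∧
      Wr i 1 f g x = -(ψ i x) * Wr 1 0 f g x) := by
  obtain ⟨hf, hg, hgpos, hWne⟩ := hfg
  have hu : UniqueDiffOn ℝ I := hIopen.uniqueDiffOn
  have h0n : 0 < n := by omega
  have h1n : 1 < n := by omega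
  have hdiff : ∀ h : ℝ → ℝ, ContDiffOn ℝ n h I → ∀ i < n, ∀ x ∈ I,
      DifferentiableAt ℝ (iteratedDeriv i h) x := by
    intro h hh i hi x hx
    have h1 : DifferentiableWithinAt ℝ (iteratedDerivWithin i h I) I x :=
      hh.differentiableOn_iteratedDerivWithin (by exact_mod_cast hi) hu x hx
    have h2 := h1.differentiableAt (hIopen.mem_nhds hx)
    apply h2.congr_of_eventuallyEq
    filter_upwards [hIopen.mem_nhds hx] with y hy
    rw [iteratedDerivWithin_eq_iteratedFDerivWithin, iteratedDeriv_eq_iteratedFDeriv,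
      iteratedFDerivWithin_of_isOpen i hIopen hy]
  have hWrD : ∀ i < n, ∀ j < n, ∀ x ∈ I,
      HasDerivAt (Wr i j f g) (Wr (i+1) j f g x + Wr i (j+1) f g x) x := by
    intro i hi j hj x hx
    have hfi := (hdiff f hf i hi x hx).hasDerivAt
    have hgi := (hdiff g hg i hi x hx).hasDerivAt
    have hfj := (hdiff f hf j hj x hx).hasDerivAt
    have hgj := (hdiff g hg j hj x hx).hasDerivAt
    rw [← iteratedDeriv_succ] at hfi hgi hfj hgj
    have H := (hfi.mul hgj).sub (hfj.mul hgi)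
    have hv : Wr (i+1) j f g x + Wr i (j+1) f g x =
        iteratedDeriv (i+1) f x * iteratedDeriv j g x + iteratedDeriv i f x * iteratedDeriv (j+1) g x
        - (iteratedDeriv (j+1) f x * iteratedDeriv i g x + iteratedDeriv j f x * iteratedDeriv (i+1) g x) := by
      simp only [Wr]; ring
    rw [hv]; exact H
  have pluck : ∀ i j : ℕ, ∀ x : ℝ,
      Wr i j f g x * Wr 1 0 f g x = Wr i 1 f g x * Wr j 0 f g x - Wr i 0 f g x * Wr j 1 f g x := by
    intro i j x; simp only [Wr]; ring
  have key : ∀ i ≤ n, ∀ x ∈ I,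
      Wr i 0 f g x = φ i x * Wr 1 0 f g x ∧ Wr i 1 f g x = -(ψ i x) * Wr 1 0 f g x := by
    intro i
    induction i with
    | zero =>
      intro _ x hx
      constructor
      · simp [Wr, hφ0 x hx]
      · simp only [Wr, hψ0 x hx]; ring
    | succ i ih =>
      intro hi x hx
      have hin : i < n := hi
      have IH := ih hin.le
      have hW0 := hWne x hx
      obtain ⟨hφr, hψr⟩ := hrec i hin x hx
      have hA := hWrD i hin 0 h0n x hx
      have hB := hWrD i hin 1 h1n x hx
      have hWd := hWrD 1 h1n 0 h0n x hx
      have h11 : Wr 1 1 f g x = 0 := by simp [Wr]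
      rw [h11, add_zero] at hWd
      have hφi : φ i x = Wr i 0 f g x / Wr 1 0 f g x := by
        rw [(IH x hx).1, mul_div_assoc, div_self hW0, mul_one]
      have hψi : ψ i x = -(Wr i 1 f g x) / Wr 1 0 f g x := by
        rw [(IH x hx).2]; field_simp
      have dφ : deriv (φ i) x =
          ((Wr (i+1) 0 f g x + Wr i 1 f g x) * Wr 1 0 f g x
            - Wr i 0 f g x * Wr 2 0 f g x) / (Wr 1 0 f g x)^2 := by
        rw [← (hA.div hWd hW0).deriv]
        apply Filter.EventuallyEq.deriv_eq
        filter_upwards [hIopen.mem_nhds hx] with y hy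
        rw [Pi.div_apply, (IH y hy).1, mul_div_assoc, div_self (hWne y hy), mul_one]
      have dψ : deriv (ψ i) x =
          -(((Wr (i+1) 1 f g x + Wr i 2 f g x) * Wr 1 0 f g x
            - Wr i 1 f g x * Wr 2 0 f g x) / (Wr 1 0 f g x)^2) := by
        rw [← ((hB.div hWd hW0).neg).deriv]
        apply Filter.EventuallyEq.deriv_eq
        filter_upwards [hIopen.mem_nhds hx] with y hy
        rw [Pi.neg_apply, Pi.div_apply, (IH y hy).2]; field_simp [hWne y hy]
      have plk : Wr i 2 f g x * Wr 1 0 f g x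
          - Wr i 1 f g x * Wr 2 0 f g x + Wr i 0 f g x * Wr 2 1 f g x = 0 := by
        simp only [Wr]; ring
      constructor
      · rw [hφr, dφ, hφi, hψi, Phi]
        field_simp
        ring
      · rw [hψr, dψ, hφi, Psi]
        field_simp
        linear_combination (-1 : ℝ) * plk
  refine ⟨?_, key⟩
  intro i hi j hj x hx
  have hW0 := hWne x hx
  apply mul_right_cancel₀ hW0
  rw [pluck i j x, (key i hi x hx).1, (key i hi x hx).2, (key j hj x hx).1, (key j hj x hx).2]
  ring
end
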